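/- arXiv:1606.04309 — 7 statements merged into one kernel-verified Lean document; each statement's English description precedes it below -/
import Mathlib

section
/- For every y ∈ E and t > s > 0 there holds σ(Γ_s^t(y)) ≤ C(n) (t/s)^n, where C(n) depends only on the dimension n. -/
open MeasureTheory Metric Set ENNReal

noncomputable section

abbrev Rn (n : ℕ) := EuclideanSpace ℝ (Fin n)

variable {n : ℕ}

/-- The cone Γ(y) = {x ∈ ℝⁿ \ E : |x-y| < 2 d(x,E)}. -/
def coneAt (E : Set (Rn n)) (y : Rn n) : Set (Rn n) :=
  {x | x ∉ E ∧ dist x y < 2 * infDist x E}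

/-- The measure σ(A) = ∫_A d(x,E)^{-n} dm_n on ℝⁿ \ E. -/
def sigmaE (E : Set (Rn n)) : Measure (Rn n) :=
  (volume.withDensity fun x => ENNReal.ofReal ((infDist x E ^ n)⁻¹)).restrict Eᶜ

/-- Size condition on the kernel. -/
def KernelSize (E : Set (Rn n)) (S : Rn n → Rn n → ℂ) (m α K₁ : ℝ) : Prop :=
  ∀ x ∉ E, ∀ y ∈ E, ‖S x y‖ ≤ K₁ * dist x y ^ (-(m + α))

/-- Hölder condition in the second variable. -/
def KernelHolder (E : Set (Rn n)) (S : Rn n → Rn n → ℂ) (m α β K₂ : ℝ) : Prop :=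
  ∀ x ∉ E, ∀ y ∈ E, ∀ y' ∈ E, dist y y' ≤ dist x y / 2 →
    ‖S x y - S x y'‖ ≤ K₂ * dist y y' ^ β * dist x y ^ (-(m + α + β))

/-- μ is a measure of order m in E with constant C₀. -/
def OrderM (E : Set (Rn n)) (μ : Measure (Rn n)) (m C₀ : ℝ) : Prop :=
  μ Eᶜ = 0 ∧ ∀ y ∈ E, ∀ r : ℝ, 0 < r → μ (ball y r) ≤ ENNReal.ofReal (C₀ * r ^ m)

/-- Square function of f (w.r.t. μ and kernel S) with the integration in the cone
variable over a set A: (∫_A |T_μ f(x)|² d(x,E)^{2α} dσ(x))^{1/2}, ℝ≥0∞-valued. -/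
def coneSFOn (E : Set (Rn n)) (S : Rn n → Rn n → ℂ) (α : ℝ) (μ : Measure (Rn n))
    (f : Rn n → ℂ) (A : Set (Rn n)) : ℝ≥0∞ :=
  (∫⁻ x in A, (‖∫ z in E, S x z * f z ∂μ‖₊ : ℝ≥0∞) ^ 2
      * ENNReal.ofReal (infDist x E ^ (2 * α)) ∂(sigmaE E)) ^ (1/2 : ℝ)

/-- Radial maximal function M^m(|f|μ)(y). -/
def radialMax (m : ℝ) (μ : Measure (Rn n)) (f : Rn n → ℂ) (y : Rn n) : ℝ≥0∞ :=
  ⨆ (r : ℝ) (_ : 0 < r), (∫⁻ z in ball y r, (‖f z‖₊ : ℝ≥0∞) ∂μ) / ENNReal.ofReal (r ^ m)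

/-- (a,b)-doubling closed ball. -/
def DoublingCB (μ : Measure (Rn n)) (a b : ℝ) (y : Rn n) (r : ℝ) : Prop :=
  μ (closedBall y (a * r)) ≤ ENNReal.ofReal b * μ (closedBall y r)

/-- κ-small boundary for a (closed) ball. -/
def SmallBoundaryCB (μ : Measure (Rn n)) (κ : ℝ) (y : Rn n) (r : ℝ) : Prop :=
  ∀ s ∈ Icc (0:ℝ) 1,
    μ {x | r * (1 - s) < dist x y ∧ dist x y < r * (1 + s)}
      ≤ ENNReal.ofReal (κ * s) * μ (closedBall y (3 * r))

/-- σ(Γ_s^t(y)) ≤ C(n) (t/s)^n. -/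
theorem statement5 (n : ℕ) :
    ∃ C > 0, ∀ (E : Set (Rn n)), IsClosed E → ∀ y ∈ E, ∀ s t : ℝ, 0 < s → s < t →
      sigmaE E {x ∈ coneAt E y | s < infDist x E ∧ infDist x E ≤ t}
        ≤ ENNReal.ofReal (C * (t / s) ^ n) := by
  set V : ℝ≥0∞ := volume (ball (0 : Rn n) 1) with hV
  have hVpos : 0 < V := measure_ball_pos _ _ one_pos
  have hVlt : V < ⊤ := measure_ball_lt_top
  refine ⟨2 ^ n * V.toReal, mul_pos (by positivity)
    (ENNReal.toReal_pos hVpos.ne' hVlt.ne), ?_⟩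
  intro E hE y hy s t hs hst
  set A := {x ∈ coneAt E y | s < infDist x E ∧ infDist x E ≤ t} with hA
  have hdist : Continuous fun x : Rn n => infDist x E := continuous_infDist_pt E
  have hAm : MeasurableSet A := by
    have hrw : A = (Eᶜ ∩ {x : Rn n | dist x y < 2 * infDist x E}) ∩
        ({x : Rn n | s < infDist x E} ∩ {x : Rn n | infDist x E ≤ t}) := by
      ext x
      simp only [hA, coneAt, mem_inter_iff, mem_setOf_eq, mem_compl_iff, mem_sep_iff]
    rw [hrw]
    exact ((hE.measurableSet.compl).inter
        (measurableSet_lt (measurable_id.dist measurable_const)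
          (hdist.measurable.const_mul 2))).inter
      ((measurableSet_lt measurable_const hdist.measurable).inter
        (measurableSet_le hdist.measurable measurable_const))
  have hball : A ⊆ ball y (2 * t) := by
    intro x hx
    rcases hx with ⟨⟨_, hcone⟩, _, hle⟩
    have : dist x y < 2 * t := lt_of_lt_of_le hcone (by nlinarith)
    simpa [mem_ball, dist_comm] using this
  have h1 : sigmaE E A ≤ ∫⁻ x in A, ENNReal.ofReal ((infDist x E ^ n)⁻¹) := by
    calc sigmaE E A ≤ (volume.withDensity fun x =>
          ENNReal.ofReal ((infDist x E ^ n)⁻¹)) A := Measure.restrict_le_self A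
      _ = ∫⁻ x in A, ENNReal.ofReal ((infDist x E ^ n)⁻¹) := withDensity_apply _ hAm
  have h2 : (∫⁻ x in A, ENNReal.ofReal ((infDist x E ^ n)⁻¹))
      ≤ ENNReal.ofReal ((s ^ n)⁻¹) * volume A := by
    rw [← setLIntegral_const A (ENNReal.ofReal ((s ^ n)⁻¹))]
    refine setLIntegral_mono_ae (by fun_prop) (Filter.Eventually.of_forall ?_)
    intro x hx
    rcases hx with ⟨_, hsx, _⟩
    apply ENNReal.ofReal_le_ofReal
    exact inv_anti₀ (pow_pos hs n)
      (pow_le_pow_left₀ hs.le hsx.le n)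
  rcases Nat.eq_zero_or_pos n with hn | hn
  · subst hn
    have hA0 : A = ∅ := by
      ext x
      simp only [hA, coneAt, mem_sep_iff, mem_setOf_eq, mem_empty_iff_false, iff_false]
      rintro ⟨⟨hxE, -⟩, -, -⟩
      exact hxE (by rwa [Subsingleton.elim x y])
    rw [hA0]
    simp
  haveI : Nonempty (Fin n) := Fin.pos_iff_nonempty.mp hn
  haveI : Nontrivial (Rn n) := inferInstance
  have h3 : volume A ≤ ENNReal.ofReal ((2 * t) ^ n) * V := by
    calc volume A ≤ volume (ball y (2 * t)) := measure_mono hball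
      _ = ENNReal.ofReal ((2 * t) ^ n) * V := by
          rw [hV, Measure.addHaar_ball volume y (by linarith : (0:ℝ) ≤ 2 * t),
            finrank_euclideanSpace_fin]
  have hst' : (0:ℝ) < t := hs.trans hst
  calc sigmaE E A ≤ ENNReal.ofReal ((s ^ n)⁻¹) * (ENNReal.ofReal ((2 * t) ^ n) * V) :=
        h1.trans (h2.trans (mul_le_mul_right h3 _))
    _ = ENNReal.ofReal ((s ^ n)⁻¹ * (2 * t) ^ n) * V := by
        rw [ENNReal.ofReal_mul (by positivity), mul_assoc]
    _ = ENNReal.ofReal (2 ^ n * V.toReal * (t / s) ^ n) := by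
        rw [show (2:ℝ) ^ n * V.toReal * (t / s) ^ n
            = ((s ^ n)⁻¹ * (2 * t) ^ n) * V.toReal by field_simp; rw [div_pow, mul_assoc _ (t ^ n / s ^ n), div_mul_cancel₀ _ (pow_ne_zero n hs.ne'), mul_pow]; ring,
          ENNReal.ofReal_mul (le_of_lt (by positivity : (0:ℝ) < (s ^ n)⁻¹ * (2 * t) ^ n)),
          ENNReal.ofReal_toReal hVlt.ne]
end
end

section
/- Let s, t > 0. Then for every y ∈ E and r > 0 there holds ∫_{Γ(y)} d(x,E)^s / (d(x,E) + r)^{s+t} dσ(x) ≤ C(s,t,n) r^{−t}, where C(s,t,n) depends only on s, t and the dimension n. -/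
open MeasureTheory Metric Set ENNReal

noncomputable section

variable {n : ℕ}

section Aux

open Measure

lemma oneD (s t r : ℝ) (hs : 0 < s) (ht : 0 < t) (hr : 0 < r) :
    ∫⁻ ρ in Ioi (0:ℝ), ENNReal.ofReal (ρ ^ (s - 1) * (ρ + r) ^ (-(s + t)))
      ≤ ENNReal.ofReal ((1/s + 1/t) * r ^ (-t)) := by
  rw [← Ioc_union_Ioi_eq_Ioi hr.le, lintegral_union measurableSet_Ioi Ioc_disjoint_Ioi_same]
  have hmeas : Measurable fun ρ : ℝ => ENNReal.ofReal (ρ ^ (s - 1)) :=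
    by fun_prop
  have I1 : ∫⁻ ρ in Ioc (0:ℝ) r, ENNReal.ofReal (ρ ^ (s - 1) * (ρ + r) ^ (-(s + t)))
      ≤ ENNReal.ofReal (r ^ (-t) / s) := by
    have step : ∫⁻ ρ in Ioc (0:ℝ) r, ENNReal.ofReal (ρ ^ (s - 1) * (ρ + r) ^ (-(s + t)))
        ≤ ∫⁻ ρ in Ioc (0:ℝ) r, ENNReal.ofReal (r ^ (-(s + t))) * ENNReal.ofReal (ρ ^ (s - 1)) := by
      refine setLIntegral_mono' measurableSet_Ioc fun ρ hρ => ?_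
      rw [← ENNReal.ofReal_mul (Real.rpow_nonneg hr.le _)]
      refine ENNReal.ofReal_le_ofReal ?_
      rw [mul_comm (r ^ (-(s+t)))]
      refine mul_le_mul_of_nonneg_left ?_ (Real.rpow_nonneg hρ.1.le _)
      exact Real.rpow_le_rpow_of_nonpos hr (le_add_of_nonneg_left hρ.1.le) (by linarith)
    refine step.trans ?_
    rw [lintegral_const_mul _ hmeas]
    have hint : IntegrableOn (fun ρ : ℝ => ρ ^ (s - 1)) (Ioc 0 r) :=
      (intervalIntegral.intervalIntegrable_rpow' (by linarith)).1
    have hval : ∫⁻ ρ in Ioc (0:ℝ) r, ENNReal.ofReal (ρ ^ (s - 1))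
        = ENNReal.ofReal (r ^ s / s) := by
      rw [← ofReal_integral_eq_lintegral_ofReal hint ?nn]
      case nn =>
        filter_upwards [ae_restrict_mem measurableSet_Ioc] with ρ hρ
        exact Real.rpow_nonneg hρ.1.le _
      congr 1
      rw [← intervalIntegral.integral_of_le hr.le, integral_rpow (Or.inl (by linarith))]
      rw [Real.zero_rpow (by linarith : s - 1 + 1 ≠ 0)]
      rw [sub_add_cancel]
      ring
    rw [hval, ← ENNReal.ofReal_mul (Real.rpow_nonneg hr.le _)]
    refine ENNReal.ofReal_le_ofReal (le_of_eq ?_)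
    rw [div_eq_mul_inv, div_eq_mul_inv, ← mul_assoc, ← Real.rpow_add hr]
    ring_nf
  have I2 : ∫⁻ ρ in Ioi r, ENNReal.ofReal (ρ ^ (s - 1) * (ρ + r) ^ (-(s + t)))
      ≤ ENNReal.ofReal (r ^ (-t) / t) := by
    have step : ∫⁻ ρ in Ioi r, ENNReal.ofReal (ρ ^ (s - 1) * (ρ + r) ^ (-(s + t)))
        ≤ ∫⁻ ρ in Ioi r, ENNReal.ofReal (ρ ^ (-1 - t)) := by
      refine setLIntegral_mono' measurableSet_Ioi fun ρ hρ => ?_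
      have hρ0 : (0:ℝ) < ρ := hr.trans hρ
      refine ENNReal.ofReal_le_ofReal ?_
      have h1 : (ρ + r) ^ (-(s + t)) ≤ ρ ^ (-(s + t)) :=
        Real.rpow_le_rpow_of_nonpos hρ0 (le_add_of_nonneg_right hr.le) (by linarith)
      calc ρ ^ (s - 1) * (ρ + r) ^ (-(s + t)) ≤ ρ ^ (s - 1) * ρ ^ (-(s + t)) :=
            mul_le_mul_of_nonneg_left h1 (Real.rpow_nonneg hρ0.le _)
        _ = ρ ^ (-1 - t) := by rw [← Real.rpow_add hρ0]; ring_nf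
    refine step.trans ?_
    have hint : IntegrableOn (fun ρ : ℝ => ρ ^ (-1 - t)) (Ioi r) :=
      integrableOn_Ioi_rpow_of_lt (by linarith) hr
    rw [← ofReal_integral_eq_lintegral_ofReal hint ?nn2]
    case nn2 =>
      filter_upwards [ae_restrict_mem measurableSet_Ioi] with ρ hρ
      exact Real.rpow_nonneg (hr.trans hρ).le _
    refine ENNReal.ofReal_le_ofReal (le_of_eq ?_)
    rw [integral_Ioi_rpow_of_lt (by linarith) hr]
    rw [show (-1 - t + 1 : ℝ) = -t by ring]
    field_simp
  calc _ ≤ ENNReal.ofReal (r ^ (-t) / s) + ENNReal.ofReal (r ^ (-t) / t) := add_le_add I1 I2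
    _ = ENNReal.ofReal ((1/s + 1/t) * r ^ (-t)) := by
        rw [← ENNReal.ofReal_add (by positivity) (by positivity)]
        congr 1
        field_simp


lemma polarLintegral {n : ℕ} (hn : n ≠ 0) (f : ℝ → ℝ≥0∞) (hf : Measurable f) :
    ∫⁻ x : Rn n, f ‖x‖ ∂volume
      = ((volume : Measure (Rn n)).toSphere univ)
          * ∫⁻ ρ in Ioi (0:ℝ), ENNReal.ofReal (ρ ^ (n - 1)) * f ρ := by
  haveI : Nonempty (Fin n) := ⟨⟨0, Nat.pos_of_ne_zero hn⟩⟩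
  haveI : Nontrivial (Rn n) := inferInstance
  have hdim : Module.finrank ℝ (Rn n) = n := finrank_euclideanSpace_fin
  have h1 := lintegral_subtype_comap (μ := (volume : Measure (Rn n)))
      (measurableSet_singleton (0 : Rn n)).compl (fun a => f ‖a‖)
  rw [MeasureTheory.restrict_compl_singleton] at h1
  have h2 := (volume : Measure (Rn n)).measurePreserving_homeomorphUnitSphereProd
  have hg : Measurable fun p : sphere (0 : Rn n) 1 × Ioi (0:ℝ) => f p.2 :=
    hf.comp (measurable_subtype_coe.comp measurable_snd)
  have h3 : ∫⁻ x : ({0}ᶜ : Set (Rn n)), f ‖(x : Rn n)‖ ∂((volume : Measure (Rn n)).comap (↑))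
      = ∫⁻ p : sphere (0 : Rn n) 1 × Ioi (0:ℝ), f p.2
          ∂(((volume : Measure (Rn n)).toSphere).prod (volumeIoiPow (Module.finrank ℝ (Rn n) - 1))) := by
    rw [← h2.lintegral_comp hg]
    simp
  rw [← h1, h3, hdim]
  rw [lintegral_prod _ hg.aemeasurable]
  simp only [lintegral_const]
  rw [mul_comm]
  congr 1
  have h4 : ∫⁻ y : (Ioi (0:ℝ)), f y ∂(volumeIoiPow (n-1))
      = ∫⁻ y : (Ioi (0:ℝ)), ENNReal.ofReal ((y:ℝ) ^ (n-1)) * f y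
          ∂((volume : Measure ℝ).comap (↑)) := by
    rw [volumeIoiPow, lintegral_withDensity_eq_lintegral_mul _
      ((measurable_subtype_coe.pow_const _).ennreal_ofReal) (show Measurable fun y : Ioi (0:ℝ) => f y from hf.comp measurable_subtype_coe)]
    rfl
  rw [h4, lintegral_subtype_comap measurableSet_Ioi (fun ρ => ENNReal.ofReal (ρ ^ (n-1)) * f ρ)]

end Aux

/-- ∫_{Γ(y)} d(x,E)^s / (d(x,E)+r)^{s+t} dσ(x) ≤ C(s,t,n) r^{−t}. -/
theorem statement6 (n : ℕ) (s t : ℝ) (hs : 0 < s) (ht : 0 < t) :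
    ∃ C > 0, ∀ (E : Set (Rn n)), IsClosed E → ∀ y ∈ E, ∀ r : ℝ, 0 < r →
      ∫⁻ x in coneAt E y,
          ENNReal.ofReal (infDist x E ^ s / (infDist x E + r) ^ (s + t)) ∂(sigmaE E)
        ≤ ENNReal.ofReal (C * r ^ (-t)) := by
  rcases Nat.eq_zero_or_pos n with hn0 | hn
  · -- trivial case n = 0
    subst hn0
    refine ⟨1, one_pos, fun E hE y hy r hr => ?_⟩
    have hempty : coneAt E y = ∅ := by
      ext x
      simp only [coneAt, mem_setOf_eq, mem_empty_iff_false, iff_false, not_and]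
      intro hx
      have hxy : x = y := by ext i; exact Fin.elim0 i
      exact absurd (hxy ▸ hy) hx
    rw [hempty]
    simp
  · -- main case
    have hn' : n ≠ 0 := hn.ne'
    set c₀ : ℝ := 2 ^ n * 2 ^ (s + t) with hc₀
    have hc₀pos : 0 < c₀ := by positivity
    set K : ℝ := (((volume : Measure (Rn n)).toSphere) univ).toReal with hK
    have hKnn : 0 ≤ K := ENNReal.toReal_nonneg
    refine ⟨c₀ * K * (1/s + 1/t) + 1, by positivity, fun E hE y hy r hr => ?_⟩
    have hEne : E.Nonempty := ⟨y, hy⟩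
    -- measurability facts
    have hconeOpen : IsOpen (coneAt E y) := by
      have h1 : IsOpen {x : Rn n | x ∉ E} := hE.isOpen_compl
      have h2 : IsOpen {x : Rn n | dist x y < 2 * infDist x E} :=
        isOpen_lt (continuous_id.dist continuous_const)
          (continuous_const.mul (continuous_infDist_pt E))
      exact h1.inter h2
    have hconeMeas : MeasurableSet (coneAt E y) := hconeOpen.measurableSet
    set f : ℝ → ℝ≥0∞ :=
      fun ρ => ENNReal.ofReal (ρ ^ (s - (n : ℝ)) * (ρ + r) ^ (-(s + t))) with hf
    have hfmeas : Measurable f := by fun_prop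
    set g : Rn n → ℝ≥0∞ :=
      fun x => ENNReal.ofReal (infDist x E ^ s / (infDist x E + r) ^ (s + t)) with hg
    have hgmeas : Measurable g := by
      have : Continuous fun x : Rn n => infDist x E := continuous_infDist_pt E
      fun_prop
    set h : Rn n → ℝ≥0∞ := fun x => ENNReal.ofReal ((infDist x E ^ n)⁻¹) with hh
    have hhmeas : Measurable h := by
      have : Continuous fun x : Rn n => infDist x E := continuous_infDist_pt E
      fun_prop
    -- Step 1: unfold sigmaE
    have hsub : coneAt E y ⊆ Eᶜ := fun x hx => hx.1
    have step1 : ∫⁻ x in coneAt E y, g x ∂(sigmaE E)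
        = ∫⁻ x in coneAt E y, h x * g x ∂volume := by
      rw [sigmaE, Measure.restrict_restrict hconeMeas, inter_eq_left.2 hsub,
        restrict_withDensity hconeMeas,
        lintegral_withDensity_eq_lintegral_mul _ hhmeas hgmeas]
      rfl
    -- Step 2: pointwise bound on the cone
    have step2 : ∀ x ∈ coneAt E y,
        h x * g x ≤ ENNReal.ofReal c₀ * f ‖x - y‖ := by
      intro x hx
      obtain ⟨hxE, hxlt⟩ := hx
      set d : ℝ := infDist x E with hd
      set ρ : ℝ := dist x y with hρdef
      have hd0 : 0 < d := (hE.notMem_iff_infDist_pos hEne).1 hxE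
      have hdρ : d ≤ ρ := infDist_le_dist_of_mem hy
      have hρ0 : 0 < ρ := lt_of_lt_of_le hd0 hdρ
      have hρ2d : ρ < 2 * d := hxlt
      have hnorm : ‖x - y‖ = ρ := by rw [hρdef, dist_eq_norm]
      rw [hnorm]
      rw [← ENNReal.ofReal_mul (by positivity)]
      rw [← ENNReal.ofReal_mul (by positivity)]
      refine ENNReal.ofReal_le_ofReal ?_
      -- real-number inequality
      have hA1 : d ^ s ≤ ρ ^ s := Real.rpow_le_rpow hd0.le hdρ hs.le
      have hA2 : (d ^ n)⁻¹ ≤ 2 ^ n * (ρ ^ n)⁻¹ := by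
        have h1 : ρ ^ n ≤ (2 * d) ^ n := pow_le_pow_left₀ dist_nonneg hρ2d.le n
        have h2 : ρ ^ n ≤ 2 ^ n * d ^ n := by rwa [mul_pow] at h1
        rw [inv_le_iff_one_le_mul₀ (by positivity)]
        rw [show (2:ℝ) ^ n * (ρ ^ n)⁻¹ * d ^ n = (2 ^ n * d ^ n) / ρ ^ n by ring]
        exact (one_le_div (pow_pos hρ0 n)).2 h2
      have hA3 : (d + r) ^ (-(s + t)) ≤ 2 ^ (s + t) * (ρ + r) ^ (-(s + t)) := by
        have h1 : (ρ + r) / 2 ≤ d + r := by linarith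
        have h2 : (d + r) ^ (-(s + t)) ≤ ((ρ + r) / 2) ^ (-(s + t)) :=
          Real.rpow_le_rpow_of_nonpos (by positivity) h1 (by linarith)
        refine h2.trans (le_of_eq ?_)
        rw [Real.div_rpow (by positivity) (by norm_num), div_eq_mul_inv,
          ← Real.rpow_neg (by norm_num), neg_neg, mul_comm]
      have hrw : d ^ s / (d + r) ^ (s + t) = d ^ s * (d + r) ^ (-(s + t)) := by
        rw [Real.rpow_neg (by positivity), div_eq_mul_inv]
      have hrw2 : ρ ^ (s - (n : ℝ)) = ρ ^ s * (ρ ^ n)⁻¹ := by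
        rw [Real.rpow_sub hρ0, Real.rpow_natCast, div_eq_mul_inv]
      rw [hrw, hrw2]
      calc (d ^ n)⁻¹ * (d ^ s * (d + r) ^ (-(s + t)))
          ≤ (2 ^ n * (ρ ^ n)⁻¹) * (ρ ^ s * (2 ^ (s + t) * (ρ + r) ^ (-(s + t)))) := by
            refine mul_le_mul hA2 ?_ (by positivity) (by positivity)
            exact mul_le_mul hA1 hA3 (by positivity) (by positivity)
        _ = c₀ * (ρ ^ s * (ρ ^ n)⁻¹ * (ρ + r) ^ (-(s + t))) := by rw [hc₀]; ring
    -- Step 3: compare with translated radial integral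
    have step3 : ∫⁻ x in coneAt E y, g x ∂(sigmaE E)
        ≤ ENNReal.ofReal c₀ * ∫⁻ x : Rn n, f ‖x - y‖ ∂volume := by
      rw [step1]
      have hmono : ∫⁻ x in coneAt E y, h x * g x ∂volume
          ≤ ∫⁻ x in coneAt E y, ENNReal.ofReal c₀ * f ‖x - y‖ ∂volume :=
        setLIntegral_mono' hconeMeas step2
      refine hmono.trans ?_
      refine (setLIntegral_le_lintegral _ _).trans (le_of_eq ?_)
      exact lintegral_const_mul _ (hfmeas.comp ((measurable_id.sub measurable_const).norm))
    -- Step 4: translation invariance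
    have step4 : ∫⁻ x : Rn n, f ‖x - y‖ ∂volume = ∫⁻ x : Rn n, f ‖x‖ ∂volume := by
      have hmp := (measurePreserving_add_right (volume : Measure (Rn n)) (-y)).lintegral_comp
        (hfmeas.comp measurable_norm)
      simp only [Function.comp] at hmp ⊢
      simp_rw [sub_eq_add_neg]
      exact hmp
    -- Step 5: polar coordinates
    have step5 : ∫⁻ x : Rn n, f ‖x‖ ∂volume
        = (((volume : Measure (Rn n)).toSphere) univ)
            * ∫⁻ ρ in Ioi (0:ℝ), ENNReal.ofReal (ρ ^ (n - 1)) * f ρ :=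
      polarLintegral hn' f hfmeas
    -- Step 6: identify the 1D integrand
    have step6 : ∫⁻ ρ in Ioi (0:ℝ), ENNReal.ofReal (ρ ^ (n - 1)) * f ρ
        = ∫⁻ ρ in Ioi (0:ℝ), ENNReal.ofReal (ρ ^ (s - 1) * (ρ + r) ^ (-(s + t))) := by
      refine setLIntegral_congr_fun measurableSet_Ioi (fun ρ hρ => ?_)
      have hρ0 : (0:ℝ) < ρ := hρ
      rw [hf, ← ENNReal.ofReal_mul (by positivity)]
      congr 1
      rw [← mul_assoc, ← Real.rpow_natCast ρ (n - 1), ← Real.rpow_add hρ0]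
      congr 2
      have : ((n - 1 : ℕ) : ℝ) = (n : ℝ) - 1 := by
        have : 1 ≤ n := hn
        push_cast [this]
        ring
      rw [this]
      ring
    -- Step 7: the 1D estimate
    have step7 : ∫⁻ ρ in Ioi (0:ℝ), ENNReal.ofReal (ρ ^ (s - 1) * (ρ + r) ^ (-(s + t)))
        ≤ ENNReal.ofReal ((1/s + 1/t) * r ^ (-t)) := oneD s t r hs ht hr
    -- Combine
    have hSph : ((volume : Measure (Rn n)).toSphere) univ = ENNReal.ofReal K := by
      rw [hK, ENNReal.ofReal_toReal (measure_ne_top _ _)]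
    calc ∫⁻ x in coneAt E y, g x ∂(sigmaE E)
        ≤ ENNReal.ofReal c₀ * ∫⁻ x : Rn n, f ‖x - y‖ ∂volume := step3
      _ = ENNReal.ofReal c₀ * (ENNReal.ofReal K
            * ∫⁻ ρ in Ioi (0:ℝ), ENNReal.ofReal (ρ ^ (s - 1) * (ρ + r) ^ (-(s + t)))) := by
          rw [step4, step5, step6, hSph]
      _ ≤ ENNReal.ofReal c₀ * (ENNReal.ofReal K * ENNReal.ofReal ((1/s + 1/t) * r ^ (-t))) := by
          exact mul_le_mul_right (mul_le_mul_right step7 _) _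
      _ = ENNReal.ofReal (c₀ * (K * ((1/s + 1/t) * r ^ (-t)))) := by
          rw [← ENNReal.ofReal_mul (by positivity), ← ENNReal.ofReal_mul hc₀pos.le]
      _ ≤ ENNReal.ofReal ((c₀ * K * (1/s + 1/t) + 1) * r ^ (-t)) := by
          refine ENNReal.ofReal_le_ofReal ?_
          have hrt : 0 ≤ r ^ (-t) := Real.rpow_nonneg hr.le _
          nlinarith [mul_nonneg (mul_nonneg hc₀pos.le hKnn) (by positivity : (0:ℝ) ≤ 1/s + 1/t)]
end
end

section
/- Let μ be a Radon measure on ℝⁿ and let κ be a big enough constant depending only on the dimension n. Suppose B(x,r) is a ball (open or closed) in ℝⁿ. Then there exists R ∈ [r, 1.2r] such that the ball B(x,R) has a κ-small boundary with respect to μ. -/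
open MeasureTheory Metric Set ENNReal

noncomputable section

variable {n : ℕ}

/-- for a Radon measure μ on ℝⁿ there is κ = κ(n) such that every ball
B(x,r) admits R ∈ [r, 1.2r] with B(x,R) having κ-small boundary. -/
theorem statement9 (n : ℕ) :
    ∃ κ > 0, ∀ (μ : Measure (Rn n)), IsLocallyFiniteMeasure μ →
      ∀ (x : Rn n) (r : ℝ), 0 < r →
        ∃ R ∈ Set.Icc r (1.2 * r),
          ∀ s ∈ Set.Icc (0:ℝ) 1,
            μ {z | R * (1 - s) < dist z x ∧ dist z x < R * (1 + s)}
              ≤ ENNReal.ofReal (κ * s) * μ (ball x (3 * R)) := by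
  classical
  refine ⟨100, by norm_num, fun μ hμ x r hr => ?_⟩
  haveI := hμ
  by_cases hM0 : μ (ball x (3 * r)) = 0
  · refine ⟨r, ⟨le_refl r, by nlinarith⟩, fun s hs => ?_⟩
    have hsub : {z : Rn n | r * (1 - s) < dist z x ∧ dist z x < r * (1 + s)}
        ⊆ ball x (3 * r) := by
      intro z hz
      have h2 := hz.2
      have := hs.2
      simp only [mem_ball]
      nlinarith
    rw [measure_mono_null hsub hM0]
    exact zero_le
  by_contra hcon
  push_neg at hcon
  choose! s hsmem hslt using hcon
  set t : Set ℝ := Set.Icc r (1.2 * r) with ht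
  set A : ℝ → Set (Rn n) :=
    fun a => {z | a * (1 - s a) < dist z x ∧ dist z x < a * (1 + s a)} with hA
  -- basic facts about s
  have hs0 : ∀ a ∈ t, 0 ≤ s a := fun a ha => (hsmem a ha).1
  have hs1 : ∀ a ∈ t, s a ≤ 1 := fun a ha => (hsmem a ha).2
  have hAmeas : ∀ a, MeasurableSet (A a) := by
    intro a
    have : A a = (fun z : Rn n => dist z x) ⁻¹' Set.Ioo (a * (1 - s a)) (a * (1 + s a)) := rfl
    rw [this]
    exact measurableSet_Ioo.preimage (continuous_id.dist continuous_const).measurable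
  -- annuli are inside the radial intervals
  have hApre : ∀ a, A a ⊆ (fun z : Rn n => dist z x) ⁻¹' Metric.closedBall a (a * s a) := by
    intro a z hz
    simp only [Set.mem_preimage, Metric.mem_closedBall, Real.dist_eq]
    rcases hz with ⟨h1, h2⟩
    rw [abs_sub_le_iff]
    constructor <;> nlinarith
  -- annuli are inside ball x (3r)
  have hAball : ∀ a ∈ t, A a ⊆ ball x (3 * r) := by
    intro a ha z hz
    have h2 := hz.2
    have ha1 := ha.1
    have ha2 := ha.2
    have := hs1 a ha
    simp only [mem_ball]
    nlinarith
  -- each annulus has positive measure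
  have hApos : ∀ a ∈ t, 0 < μ (A a) := by
    intro a ha
    exact lt_of_le_of_lt zero_le (hslt a ha)
  -- s a > 0 for a ∈ t (not needed, skip)
  -- Vitali covering
  obtain ⟨u, hut, hdisj, hcov⟩ :=
    Vitali.exists_disjoint_subfamily_covering_enlargement_closedBall t id (fun a => a * s a)
      (1.2 * r) (fun a ha => by nlinarith [hs1 a ha, ha.1, ha.2]) 4 (by norm_num)
  -- annuli over u are pairwise disjoint
  have hAdisj : u.PairwiseDisjoint A := by
    intro b hb c hc hbc
    have := hdisj hb hc hbc
    simp only [Function.onFun, id] at this ⊢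
    exact ((this.preimage (fun z : Rn n => dist z x)).mono (hApre b) (hApre c))
  -- countability of u
  have hufin : μ (ball x (3 * r)) ≠ ∞ := by
    refine ne_of_lt (lt_of_le_of_lt (measure_mono Metric.ball_subset_closedBall) ?_)
    exact (isCompact_closedBall x (3 * r)).measure_lt_top
  have hucount : u.Countable := by
    set As : ℝ → Set (Rn n) := fun b => if b ∈ u then A b else ∅ with hAs
    have hAsm : ∀ b, MeasurableSet (As b) := by
      intro b
      by_cases hb : b ∈ u <;> simp [hAs, hb, hAmeas b]
    have hAsd : Pairwise (Function.onFun Disjoint As) := by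
      intro b c hbc
      simp only [Function.onFun, hAs]
      by_cases hb : b ∈ u
      · by_cases hc : c ∈ u
        · simp only [hb, hc, if_true]
          exact hAdisj hb hc hbc
        · simp [hc]
      · simp [hb]
    have hAsfin : μ (⋃ b, As b) ≠ ∞ := by
      refine ne_of_lt (lt_of_le_of_lt (measure_mono ?_) hufin.lt_top)
      refine Set.iUnion_subset fun b => ?_
      by_cases hb : b ∈ u
      · simp only [hAs, hb, if_true]
        exact hAball b (hut hb)
      · simp [hAs, hb]
    have := MeasureTheory.Measure.countable_meas_pos_of_disjoint_of_meas_iUnion_ne_top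
      μ hAsm hAsd hAsfin
    refine this.mono fun b hb => ?_
    simp only [Set.mem_setOf_eq, hAs, hb, if_true]
    exact hApos b (hut hb)
  -- key sum T
  set T : ℝ≥0∞ := ∑' b : u, ENNReal.ofReal (s b) with hT
  -- Step 1 : 100 * T ≤ 1
  have step1 : ENNReal.ofReal 100 * T ≤ 1 := by
    have hterm : ∀ b : u, ENNReal.ofReal (100 * s (b : ℝ)) * μ (ball x (3 * r)) ≤ μ (A b) := by
      rintro ⟨b, hb⟩
      have hbt := hut hb
      have h1 : μ (ball x (3 * r)) ≤ μ (ball x (3 * b)) :=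
        measure_mono (Metric.ball_subset_ball (by nlinarith [hbt.1]))
      calc ENNReal.ofReal (100 * s b) * μ (ball x (3 * r))
          ≤ ENNReal.ofReal (100 * s b) * μ (ball x (3 * b)) := mul_le_mul_right h1 _
        _ ≤ μ (A b) := (hslt b hbt).le
    have hsum : ∑' b : u, ENNReal.ofReal (100 * s (b : ℝ)) * μ (ball x (3 * r))
        ≤ μ (ball x (3 * r)) := by
      calc ∑' b : u, ENNReal.ofReal (100 * s (b : ℝ)) * μ (ball x (3 * r))
          ≤ ∑' b : u, μ (A b) := ENNReal.tsum_le_tsum hterm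
        _ = μ (⋃ b ∈ u, A b) := (measure_biUnion hucount hAdisj fun b _ => hAmeas b).symm
        _ ≤ μ (ball x (3 * r)) :=
            measure_mono (Set.iUnion₂_subset fun b hb => hAball b (hut hb))
    have hre : ∑' b : u, ENNReal.ofReal (100 * s (b : ℝ)) * μ (ball x (3 * r))
        = ENNReal.ofReal 100 * T * μ (ball x (3 * r)) := by
      rw [ENNReal.tsum_mul_right, hT, ← ENNReal.tsum_mul_left]
      congr 1
      refine tsum_congr fun b => ?_
      rw [← ENNReal.ofReal_mul (by norm_num)]
    rw [hre] at hsum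
    have hsum' : ENNReal.ofReal 100 * T * μ (ball x (3 * r)) ≤ 1 * μ (ball x (3 * r)) := by
      rw [one_mul]; exact hsum
    exact (ENNReal.mul_le_mul_iff_left hM0 hufin).mp hsum'
  -- Step 2 : ofReal (0.2 * r) ≤ ofReal (9.6 * r) * T
  have step2 : ENNReal.ofReal (0.2 * r) ≤ ENNReal.ofReal (9.6 * r) * T := by
    have hcover : t ⊆ ⋃ b ∈ u, Metric.closedBall b (4 * (b * s b)) := by
      intro a ha
      obtain ⟨b, hb, hsub⟩ := hcov a ha
      refine Set.mem_iUnion₂.mpr ⟨b, hb, hsub ?_⟩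
      simp only [id]
      exact Metric.mem_closedBall_self (by nlinarith [hs0 a ha, ha.1])
    have hvol : ENNReal.ofReal (0.2 * r) ≤ volume (⋃ b ∈ u, Metric.closedBall b (4 * (b * s b))) := by
      refine le_trans ?_ (measure_mono hcover)
      rw [ht, Real.volume_Icc]
      exact ENNReal.ofReal_le_ofReal (by nlinarith)
    have hsum : volume (⋃ b ∈ u, Metric.closedBall b (4 * (b * s b)))
        ≤ ∑' b : u, volume (Metric.closedBall (b : ℝ) (4 * ((b : ℝ) * s b))) :=
      measure_biUnion_le volume hucount _
    have hterm : ∀ b : u, volume (Metric.closedBall (b : ℝ) (4 * ((b : ℝ) * s b)))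
        ≤ ENNReal.ofReal (9.6 * r) * ENNReal.ofReal (s (b : ℝ)) := by
      rintro ⟨b, hb⟩
      have hbt := hut hb
      rw [Real.volume_closedBall, ← ENNReal.ofReal_mul (by nlinarith)]
      exact ENNReal.ofReal_le_ofReal (by nlinarith [hs0 b hbt, hbt.1, hbt.2])
    calc ENNReal.ofReal (0.2 * r)
        ≤ ∑' b : u, volume (Metric.closedBall (b : ℝ) (4 * ((b : ℝ) * s b))) := hvol.trans hsum
      _ ≤ ∑' b : u, ENNReal.ofReal (9.6 * r) * ENNReal.ofReal (s (b : ℝ)) :=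
          ENNReal.tsum_le_tsum hterm
      _ = ENNReal.ofReal (9.6 * r) * T := by rw [ENNReal.tsum_mul_left]
  -- combine
  have hTle : T ≤ ENNReal.ofReal (1 / 100) := by
    rw [← ENNReal.ofReal_one] at step1
    have h100 : ENNReal.ofReal (100:ℝ) ≠ 0 := by simp
    have h100' : ENNReal.ofReal (100:ℝ) ≠ ∞ := ENNReal.ofReal_ne_top
    rw [ENNReal.ofReal_div_of_pos (by norm_num)]
    rw [ENNReal.le_div_iff_mul_le (Or.inl h100) (Or.inl h100'), mul_comm]
    exact step1
  have final : ENNReal.ofReal (0.2 * r) ≤ ENNReal.ofReal (0.096 * r) := by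
    calc ENNReal.ofReal (0.2 * r) ≤ ENNReal.ofReal (9.6 * r) * T := step2
      _ ≤ ENNReal.ofReal (9.6 * r) * ENNReal.ofReal (1 / 100) := mul_le_mul_right hTle _
      _ = ENNReal.ofReal (0.096 * r) := by
          rw [← ENNReal.ofReal_mul (by nlinarith)]
          congr 1
          ring
  rw [ENNReal.ofReal_le_ofReal_iff (by nlinarith)] at final
  nlinarith
end
end

section
/- Suppose μ is a non-negative Borel measure on ℝⁿ satisfying μ(B(y,r)) ≤ C₀ r^m for all y ∈ ℝⁿ and r > 0 (a measure of order m in ℝⁿ). Let a > 1 and b > a^m (with b also exceeding a constant multiple of C₀ a^m as needed). Then for every ball B in ℝⁿ there exists s > 1 such that the concentric dilated ball sB is (a,b)-doubling with respect to μ, i.e. μ(a(sB)) ≤ b μ(sB). -/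
open MeasureTheory Metric Set ENNReal

noncomputable section

variable {n : ℕ}

/-- if μ has order m in ℝⁿ, a > 1 and b > a^m, then every ball admits a
concentric dilate sB, s > 1, which is (a,b)-doubling. -/
theorem statement12 (n : ℕ) (m a b C₀ : ℝ) (hm : 0 < m) (ha : 1 < a) (hb : a ^ m < b)
    (μ : Measure (Rn n))
    (hμ : ∀ (y : Rn n) (r : ℝ), 0 < r → μ (ball y r) ≤ ENNReal.ofReal (C₀ * r ^ m))
    (x : Rn n) (r : ℝ) (hr : 0 < r) :
    ∃ s > 1, μ (ball x (a * (s * r))) ≤ ENNReal.ofReal b * μ (ball x (s * r)) := by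
  have ha0 : (0:ℝ) < a := lt_trans one_pos ha
  have ham : (0:ℝ) < a ^ m := Real.rpow_pos_of_pos ha0 m
  have hb0 : (0:ℝ) < b := lt_trans ham hb
  by_contra hcon
  push_neg at hcon
  have hex : ∃ s₀ > 1, 0 < μ (ball x (s₀ * r)) := by
    rcases eq_or_ne (μ (ball x (2 * r))) 0 with h0 | h0
    · refine ⟨2 * a, by nlinarith, ?_⟩
      have h2 := hcon 2 one_lt_two
      rw [h0, mul_zero] at h2
      have he : a * (2 * r) = 2 * a * r := by ring
      rw [he] at h2
      exact h2
    · exact ⟨2, one_lt_two, pos_iff_ne_zero.mpr h0⟩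
  obtain ⟨s₀, hs₀, hc⟩ := hex
  set c := μ (ball x (s₀ * r)) with hcdef
  have hs₀r : 0 < s₀ * r := by nlinarith
  have hcle : c ≤ ENNReal.ofReal (C₀ * (s₀ * r) ^ m) := hμ x (s₀ * r) hs₀r
  have hctop : c ≠ ⊤ := ne_top_of_le_ne_top ofReal_ne_top hcle
  have hcR : 0 < c.toReal := toReal_pos hc.ne' hctop
  have hsr : (0:ℝ) < (s₀ * r) ^ m := Real.rpow_pos_of_pos hs₀r m
  have hC₀ : 0 < C₀ * (s₀ * r) ^ m := by
    by_contra hC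
    push_neg at hC
    rw [ofReal_eq_zero.mpr hC] at hcle
    exact hc.ne' (le_antisymm hcle zero_le)
  have key : ∀ k : ℕ, ENNReal.ofReal b ^ k * c ≤ μ (ball x ((a ^ k * s₀) * r)) := by
    intro k
    induction k with
    | zero => simp [hcdef]
    | succ k ih =>
      have hak : (1:ℝ) ≤ a ^ k := one_le_pow₀ ha.le
      have hk1 : 1 < a ^ k * s₀ := by nlinarith
      have h2 := hcon (a ^ k * s₀) hk1
      calc ENNReal.ofReal b ^ (k+1) * c
          = ENNReal.ofReal b * (ENNReal.ofReal b ^ k * c) := by ring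
        _ ≤ ENNReal.ofReal b * μ (ball x ((a ^ k * s₀) * r)) := by
            exact mul_le_mul_right ih _
        _ ≤ μ (ball x (a * ((a ^ k * s₀) * r))) := h2.le
        _ = μ (ball x ((a ^ (k+1) * s₀) * r)) := by rw [show a * ((a ^ k * s₀) * r) = (a ^ (k+1) * s₀) * r by ring]
  -- choose k
  have hba : 1 < b / a ^ m := (one_lt_div ham).mpr hb
  obtain ⟨k, hk⟩ := pow_unbounded_of_one_lt (C₀ * (s₀ * r) ^ m / c.toReal) hba
  have hk1 : (1:ℝ) ≤ a ^ k := one_le_pow₀ ha.le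
  have hakr : 0 < (a ^ k * s₀) * r := by nlinarith
  have h1 := (key k).trans (hμ x ((a ^ k * s₀) * r) hakr)
  -- rewrite exponent
  have hrm : ((a ^ k * s₀) * r) ^ m = (a ^ m) ^ k * (s₀ * r) ^ m := by
    rw [mul_assoc, Real.mul_rpow (by positivity) (by positivity),
      ← Real.rpow_natCast a k, ← Real.rpow_natCast (a ^ m) k,
      ← Real.rpow_mul ha0.le, ← Real.rpow_mul ha0.le, mul_comm (k:ℝ) m, mul_comm]
  rw [hrm] at h1
  have hcofr : c = ENNReal.ofReal c.toReal := (ofReal_toReal hctop).symm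
  rw [hcofr, ← ofReal_pow hb0.le, ← ofReal_mul (by positivity)] at h1
  have hC0' : 0 < C₀ := by
    by_contra h
    push_neg at h
    nlinarith
  have h2 : b ^ k * c.toReal ≤ C₀ * ((a ^ m) ^ k * (s₀ * r) ^ m) :=
    (ofReal_le_ofReal_iff (by positivity)).mp h1
  have hamk : (0:ℝ) < (a ^ m) ^ k := pow_pos ham k
  have h3 := mul_lt_mul_of_pos_right hk hamk
  have heq : (b / a ^ m) ^ k * (a ^ m) ^ k = b ^ k := by
    rw [div_pow]
    field_simp
  rw [heq] at h3
  have h4 := mul_lt_mul_of_pos_right h3 hcR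
  rw [div_mul_eq_mul_div, div_mul_eq_mul_div, mul_div_cancel_right₀ _ hcR.ne'] at h4
  ring_nf at h2 h4
  linarith
end
end

section
/- Suppose μ is a Radon measure on ℝⁿ, let a > 1 and b > a^m for some m > 0, and let B₁ ⊂ B₂ be two balls with common center x. Assume that none of the balls a^k B₁ is (a,b)-doubling with respect to μ, for those integers k ≥ 0 with B₁ ⊊ a^k B₁ ⊂ B₂. Then ∫_{B₂ \ B₁} |y−x|^{−m} dμ(y) ≤ C(a,b,m) μ(B₂)/r(B₂)^m, where r(B₂) is the radius of B₂ and C(a,b,m) depends only on a, b, m. -/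
open MeasureTheory Metric Set ENNReal

noncomputable section

variable {n : ℕ}

lemma lintegral_finset_biUnion_le' {α : Type*} [MeasurableSpace α] (μ : Measure α)
    (f : α → ℝ≥0∞) (s : Finset ℕ) (t : ℕ → Set α) :
    ∫⁻ y in ⋃ k ∈ s, t k, f y ∂μ ≤ ∑ k ∈ s, ∫⁻ y in t k, f y ∂μ := by
  classical
  induction s using Finset.induction with
  | empty => simp
  | @insert a s ha ih =>
    rw [Finset.set_biUnion_insert, Finset.sum_insert ha]
    exact le_trans (lintegral_union_le _ _ _) (add_le_add le_rfl ih)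

/-- if no ball a^k B₁ with B₁ ⊊ a^k B₁ ⊂ B₂ is (a,b)-doubling, then
∫_{B₂ \ B₁} |y−x|^{−m} dμ(y) ≤ C(a,b,m) μ(B₂)/r(B₂)^m. -/
theorem statement13 (m a b : ℝ) (hm : 0 < m) (ha : 1 < a) (hb : a ^ m < b) :
    ∃ C > 0, ∀ (n : ℕ) (μ : Measure (Rn n)), IsLocallyFiniteMeasure μ →
      ∀ (x : Rn n) (r₁ r₂ : ℝ), 0 < r₁ → r₁ ≤ r₂ →
      (∀ k : ℕ, r₁ < a ^ k * r₁ → a ^ k * r₁ ≤ r₂ →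
        ¬ (μ (ball x (a * (a ^ k * r₁))) ≤ ENNReal.ofReal b * μ (ball x (a ^ k * r₁)))) →
      ∫⁻ y in ball x r₂ \ ball x r₁, ENNReal.ofReal ((dist y x ^ m)⁻¹) ∂μ
        ≤ ENNReal.ofReal (C / r₂ ^ m) * μ (ball x r₂) := by
  classical
  have ha0 : (0:ℝ) < a := lt_trans one_pos ha
  set A := a ^ m with hAdef
  have hA1 : 1 < A := (Real.one_lt_rpow_iff_of_pos ha0).2 (Or.inl ⟨ha, hm⟩)
  have hA0 : (0:ℝ) < A := lt_trans one_pos hA1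
  have hbA : (0:ℝ) < b - A := sub_pos.2 hb
  have hb0 : (0:ℝ) < b := lt_trans hA0 hb
  refine ⟨A + A ^ 2 * (b / (b - A)), by positivity, ?_⟩
  intro n μ hμ x r₁ r₂ hr₁ hr₁₂ hnd
  have hr₂ : (0:ℝ) < r₂ := lt_of_lt_of_le hr₁ hr₁₂
  have hr₂m : (0:ℝ) < r₂ ^ m := Real.rpow_pos_of_pos hr₂ m
  have hpow : ∀ k : ℕ, ((a ^ k * r₁) ^ m : ℝ) = A ^ k * r₁ ^ m := by
    intro k
    rw [Real.mul_rpow (pow_nonneg ha0.le k) hr₁.le]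
    congr 1
    rw [← Real.rpow_natCast a k, ← Real.rpow_natCast A k, hAdef,
      ← Real.rpow_mul ha0.le, ← Real.rpow_mul ha0.le, mul_comm]
  -- choose N with a^N r₁ ≤ r₂ < a^(N+1) r₁
  have hex : ∃ k : ℕ, r₂ < a ^ k * r₁ := by
    obtain ⟨k, hk⟩ := pow_unbounded_of_one_lt (r₂ / r₁) ha
    exact ⟨k, (div_lt_iff₀ hr₁).1 hk⟩
  have hK0 : Nat.find hex ≠ 0 := by
    intro h0
    have h := Nat.find_spec hex
    rw [h0] at h
    simp only [pow_zero, one_mul] at h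
    exact absurd hr₁₂ (not_le.2 h)
  set N : ℕ := Nat.find hex - 1 with hNdef
  have hN2 : r₂ < a ^ (N + 1) * r₁ := by
    have h : N + 1 = Nat.find hex := by omega
    rw [h]; exact Nat.find_spec hex
  have hN1 : a ^ N * r₁ ≤ r₂ := by
    by_contra h
    exact Nat.find_min hex (by omega : N < Nat.find hex) (not_le.1 h)
  -- the doubling chain
  have chain : ∀ j k : ℕ, 1 ≤ k → k + j ≤ N →
      ENNReal.ofReal (b ^ j) * μ (ball x (a ^ k * r₁)) ≤ μ (ball x (a ^ (k + j) * r₁)) := by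
    intro j
    induction j with
    | zero => intro k _ _; simp
    | succ j ih =>
      intro k hk1 hkN
      have h1 := ih k hk1 (by omega)
      have hlt : r₁ < a ^ (k + j) * r₁ := by
        nth_rewrite 1 [← one_mul r₁]
        exact mul_lt_mul_of_pos_right (one_lt_pow₀ ha (by omega)) hr₁
      have hle : a ^ (k + j) * r₁ ≤ r₂ :=
        le_trans (mul_le_mul_of_nonneg_right
          (pow_le_pow_right₀ ha.le (by omega : k + j ≤ N)) hr₁.le) hN1
      have h2 := not_le.1 (hnd (k + j) hlt hle)
      have heq : a * (a ^ (k + j) * r₁) = a ^ (k + (j + 1)) * r₁ := by ring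
      rw [heq] at h2
      calc ENNReal.ofReal (b ^ (j + 1)) * μ (ball x (a ^ k * r₁))
          = ENNReal.ofReal b * (ENNReal.ofReal (b ^ j) * μ (ball x (a ^ k * r₁))) := by
            rw [pow_succ, ENNReal.ofReal_mul (pow_nonneg hb0.le j),
              mul_comm (ENNReal.ofReal (b ^ j)), mul_assoc]
        _ ≤ ENNReal.ofReal b * μ (ball x (a ^ (k + j) * r₁)) := mul_le_mul_right h1 _
        _ ≤ μ (ball x (a ^ (k + (j + 1)) * r₁)) := h2.le
  -- measure of intermediate balls
  have hμball : ∀ k : ℕ, k < N →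
      μ (ball x (a ^ (k + 1) * r₁))
        ≤ ENNReal.ofReal ((b ^ (N - 1 - k))⁻¹) * μ (ball x r₂) := by
    intro k hk
    have h := chain (N - 1 - k) (k + 1) (by omega) (by omega)
    have hkj : k + 1 + (N - 1 - k) = N := by omega
    rw [hkj] at h
    have h' : μ (ball x (a ^ N * r₁)) ≤ μ (ball x r₂) :=
      measure_mono (ball_subset_ball hN1)
    have hbj : (0:ℝ) < b ^ (N - 1 - k) := pow_pos hb0 _
    calc μ (ball x (a ^ (k + 1) * r₁))
        = ENNReal.ofReal ((b ^ (N - 1 - k))⁻¹) *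
            (ENNReal.ofReal (b ^ (N - 1 - k)) * μ (ball x (a ^ (k + 1) * r₁))) := by
          rw [← mul_assoc, ← ENNReal.ofReal_mul (by positivity), inv_mul_cancel₀ hbj.ne',
            ENNReal.ofReal_one, one_mul]
      _ ≤ ENNReal.ofReal ((b ^ (N - 1 - k))⁻¹) * μ (ball x r₂) :=
          mul_le_mul_right (le_trans h h') _
  -- generic annulus integral bound
  have hpiece : ∀ ρ R : ℝ, 0 < ρ →
      ∫⁻ y in ball x R \ ball x ρ, ENNReal.ofReal ((dist y x ^ m)⁻¹) ∂μ
        ≤ ENNReal.ofReal ((ρ ^ m)⁻¹) * μ (ball x R) := by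
    intro ρ R hρ
    have hbd : ∀ y ∈ ball x R \ ball x ρ,
        ENNReal.ofReal ((dist y x ^ m)⁻¹) ≤ ENNReal.ofReal ((ρ ^ m)⁻¹) := by
      intro y hy
      apply ENNReal.ofReal_le_ofReal
      have hdy : ρ ≤ dist y x := by
        have h := hy.2
        simpa [mem_ball, not_lt] using h
      exact inv_anti₀ (Real.rpow_pos_of_pos hρ m)
        (Real.rpow_le_rpow hρ.le hdy hm.le)
    calc ∫⁻ y in ball x R \ ball x ρ, ENNReal.ofReal ((dist y x ^ m)⁻¹) ∂μ
        ≤ ∫⁻ _ in ball x R \ ball x ρ, ENNReal.ofReal ((ρ ^ m)⁻¹) ∂μ :=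
          setLIntegral_mono measurable_const hbd
      _ = ENNReal.ofReal ((ρ ^ m)⁻¹) * μ (ball x R \ ball x ρ) :=
          setLIntegral_const _ _
      _ ≤ ENNReal.ofReal ((ρ ^ m)⁻¹) * μ (ball x R) :=
          mul_le_mul_right (measure_mono diff_subset) _
  -- decomposition of the annulus
  have hsub : ball x r₂ \ ball x r₁ ⊆
      (ball x r₂ \ ball x (a ^ N * r₁)) ∪
        ⋃ k ∈ Finset.range N, (ball x (a ^ (k + 1) * r₁) \ ball x (a ^ k * r₁)) := by
    intro y hy
    by_cases hcase : dist y x < a ^ N * r₁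
    · right
      have hex2 : ∃ k : ℕ, dist y x < a ^ k * r₁ := ⟨N, hcase⟩
      have hK2 : Nat.find hex2 ≠ 0 := by
        intro h0
        have h := Nat.find_spec hex2
        rw [h0] at h
        simp only [pow_zero, one_mul] at h
        exact hy.2 (mem_ball.2 h)
      have hK2N : Nat.find hex2 ≤ N := Nat.find_le hcase
      refine Set.mem_iUnion₂.2 ⟨Nat.find hex2 - 1,
        Finset.mem_range.2 (by omega : Nat.find hex2 - 1 < N), ?_, ?_⟩
      · have h := Nat.find_spec hex2
        have heq : Nat.find hex2 - 1 + 1 = Nat.find hex2 := by omega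
        rw [mem_ball, heq]
        exact h
      · intro hmem
        exact Nat.find_min hex2 (by omega : Nat.find hex2 - 1 < Nat.find hex2)
          (mem_ball.1 hmem)
    · left
      exact ⟨hy.1, fun hmem => hcase (mem_ball.1 hmem)⟩
  -- real coefficient estimates
  have h1 : r₂ ^ m ≤ A ^ (N + 1) * r₁ ^ m := by
    have h := Real.rpow_le_rpow hr₂.le hN2.le hm.le
    rwa [hpow (N + 1)] at h
  have hfirst : (((a ^ N * r₁) ^ m)⁻¹ : ℝ) ≤ A / r₂ ^ m := by
    rw [hpow N, ← inv_div]
    apply inv_anti₀ (by positivity)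
    rw [div_le_iff₀ hA0]
    calc r₂ ^ m ≤ A ^ (N + 1) * r₁ ^ m := h1
      _ = A ^ N * r₁ ^ m * A := by ring
  have hterm : ∀ k ∈ Finset.range N,
      (((a ^ k * r₁) ^ m)⁻¹ * ((b ^ (N - 1 - k))⁻¹) : ℝ)
        ≤ A ^ 2 / r₂ ^ m * ((A / b) ^ (N - 1 - k)) := by
    intro k hk
    rw [Finset.mem_range] at hk
    have hkj : k + (N - 1 - k + 2) = N + 1 := by omega
    have h2 : (((a ^ k * r₁) ^ m)⁻¹ : ℝ) ≤ A ^ (N - 1 - k + 2) / r₂ ^ m := by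
      rw [hpow k, ← inv_div]
      apply inv_anti₀ (by positivity)
      rw [div_le_iff₀ (by positivity : (0:ℝ) < A ^ (N - 1 - k + 2))]
      calc r₂ ^ m ≤ A ^ (N + 1) * r₁ ^ m := h1
        _ = A ^ k * r₁ ^ m * A ^ (N - 1 - k + 2) := by rw [← hkj, pow_add]; ring
    have hbj : (0:ℝ) < b ^ (N - 1 - k) := pow_pos hb0 _
    calc (((a ^ k * r₁) ^ m)⁻¹ * ((b ^ (N - 1 - k))⁻¹) : ℝ)
        ≤ A ^ (N - 1 - k + 2) / r₂ ^ m * ((b ^ (N - 1 - k))⁻¹) :=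
          mul_le_mul_of_nonneg_right h2 (by positivity)
      _ = A ^ 2 / r₂ ^ m * ((A / b) ^ (N - 1 - k)) := by
          rw [div_pow, pow_add]
          field_simp
  have hgeom : ∑ j ∈ Finset.range N, (A / b) ^ j ≤ b / (b - A) := by
    have hx1 : A / b < 1 := (div_lt_one hb0).2 hb
    have hx0 : (0:ℝ) ≤ A / b := by positivity
    have hSeq : ∑ j ∈ Finset.range N, (A / b) ^ j
        = (1 - (A / b) ^ N) / (1 - A / b) := by
      rw [geom_sum_eq hx1.ne N, ← neg_sub 1 ((A/b)^N), ← neg_sub 1 (A/b), neg_div_neg_eq]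
    rw [hSeq]
    have hb' : (1:ℝ) - A / b = (b - A) / b := by field_simp
    calc (1 - (A / b) ^ N) / (1 - A / b) ≤ 1 / (1 - A / b) := by
          apply div_le_div₀ zero_le_one (by nlinarith [pow_nonneg hx0 N]) (by linarith) le_rfl
      _ = b / (b - A) := by rw [hb', one_div_div]
  have hsum1 : ∑ k ∈ Finset.range N, ((((a ^ k * r₁) ^ m)⁻¹ * ((b ^ (N - 1 - k))⁻¹)) : ℝ)
      ≤ A ^ 2 / r₂ ^ m * (b / (b - A)) := by
    calc ∑ k ∈ Finset.range N, ((((a ^ k * r₁) ^ m)⁻¹ * ((b ^ (N - 1 - k))⁻¹)) : ℝ)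
        ≤ ∑ k ∈ Finset.range N, (A ^ 2 / r₂ ^ m * ((A / b) ^ (N - 1 - k))) :=
          Finset.sum_le_sum hterm
      _ = A ^ 2 / r₂ ^ m * ∑ j ∈ Finset.range N, (A / b) ^ j := by
          rw [← Finset.mul_sum]
          congr 1
          exact Finset.sum_range_reflect (fun j => (A / b) ^ j) N
      _ ≤ A ^ 2 / r₂ ^ m * (b / (b - A)) :=
          mul_le_mul_of_nonneg_left hgeom (by positivity)
  have hsum_real : (((a ^ N * r₁) ^ m)⁻¹ : ℝ) +
      ∑ k ∈ Finset.range N, ((((a ^ k * r₁) ^ m)⁻¹ * ((b ^ (N - 1 - k))⁻¹)) : ℝ)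
        ≤ (A + A ^ 2 * (b / (b - A))) / r₂ ^ m := by
    calc (((a ^ N * r₁) ^ m)⁻¹ : ℝ) +
        ∑ k ∈ Finset.range N, ((((a ^ k * r₁) ^ m)⁻¹ * ((b ^ (N - 1 - k))⁻¹)) : ℝ)
        ≤ A / r₂ ^ m + A ^ 2 / r₂ ^ m * (b / (b - A)) := add_le_add hfirst hsum1
      _ = (A + A ^ 2 * (b / (b - A))) / r₂ ^ m := by ring
  -- main chain of inequalities
  calc ∫⁻ y in ball x r₂ \ ball x r₁, ENNReal.ofReal ((dist y x ^ m)⁻¹) ∂μ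
      ≤ ∫⁻ y in (ball x r₂ \ ball x (a ^ N * r₁)) ∪
          ⋃ k ∈ Finset.range N, (ball x (a ^ (k + 1) * r₁) \ ball x (a ^ k * r₁)),
          ENNReal.ofReal ((dist y x ^ m)⁻¹) ∂μ := lintegral_mono_set hsub
    _ ≤ (∫⁻ y in ball x r₂ \ ball x (a ^ N * r₁), ENNReal.ofReal ((dist y x ^ m)⁻¹) ∂μ)
        + ∫⁻ y in ⋃ k ∈ Finset.range N, (ball x (a ^ (k + 1) * r₁) \ ball x (a ^ k * r₁)),
            ENNReal.ofReal ((dist y x ^ m)⁻¹) ∂μ := lintegral_union_le _ _ _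
    _ ≤ (∫⁻ y in ball x r₂ \ ball x (a ^ N * r₁), ENNReal.ofReal ((dist y x ^ m)⁻¹) ∂μ)
        + ∑ k ∈ Finset.range N, ∫⁻ y in ball x (a ^ (k + 1) * r₁) \ ball x (a ^ k * r₁),
            ENNReal.ofReal ((dist y x ^ m)⁻¹) ∂μ :=
          add_le_add le_rfl (lintegral_finset_biUnion_le' μ _ _ _)
    _ ≤ ENNReal.ofReal (((a ^ N * r₁) ^ m)⁻¹) * μ (ball x r₂)
        + ∑ k ∈ Finset.range N,
            ENNReal.ofReal (((a ^ k * r₁) ^ m)⁻¹ * ((b ^ (N - 1 - k))⁻¹)) * μ (ball x r₂) := by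
          refine add_le_add (hpiece _ _ (by positivity)) (Finset.sum_le_sum fun k hk => ?_)
          rw [Finset.mem_range] at hk
          calc ∫⁻ y in ball x (a ^ (k + 1) * r₁) \ ball x (a ^ k * r₁),
                ENNReal.ofReal ((dist y x ^ m)⁻¹) ∂μ
              ≤ ENNReal.ofReal (((a ^ k * r₁) ^ m)⁻¹) * μ (ball x (a ^ (k + 1) * r₁)) :=
                hpiece _ _ (by positivity)
            _ ≤ ENNReal.ofReal (((a ^ k * r₁) ^ m)⁻¹) *
                  (ENNReal.ofReal ((b ^ (N - 1 - k))⁻¹) * μ (ball x r₂)) :=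
                mul_le_mul_right (hμball k hk) _
            _ = ENNReal.ofReal (((a ^ k * r₁) ^ m)⁻¹ * ((b ^ (N - 1 - k))⁻¹)) * μ (ball x r₂) := by
                rw [← mul_assoc, ← ENNReal.ofReal_mul (by positivity)]
    _ = ENNReal.ofReal ((((a ^ N * r₁) ^ m)⁻¹ : ℝ) +
          ∑ k ∈ Finset.range N, ((((a ^ k * r₁) ^ m)⁻¹ * ((b ^ (N - 1 - k))⁻¹)) : ℝ))
          * μ (ball x r₂) := by
        rw [← Finset.sum_mul, ← ENNReal.ofReal_sum_of_nonneg (fun k _ => by positivity),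
          ← add_mul, ← ENNReal.ofReal_add (by positivity)
            (Finset.sum_nonneg fun k _ => by positivity)]
    _ ≤ ENNReal.ofReal ((A + A ^ 2 * (b / (b - A))) / r₂ ^ m) * μ (ball x r₂) :=
        mul_le_mul_left (ENNReal.ofReal_le_ofReal hsum_real) _
end
end

section
/- Suppose μ is a measure of order m in E, let 0 < s < t, and let f ∈ L¹(μ). Then for all y, y′ ∈ E one has |C_{μ,s}^t f(y) − C_{μ,s}^t f(y′)| ≤ C ‖f‖_{L¹(μ)} s^{−m} σ(Γ_s^t(y) Δ Γ_s^t(y′))^{1/2} (with C depending only on K₁); consequently, since σ(Γ_s(y) Δ Γ_s(y′)) ≲ |y−y′|/s when 10|y−y′| < s, the map y ↦ C_{μ,s}^t f(y) is continuous on E. -/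
open MeasureTheory Metric Set ENNReal

noncomputable section

variable {n : ℕ}

/-- The truncated cone Γ_s^t(y). -/
def truncCone (E : Set (Rn n)) (y : Rn n) (s t : ℝ) : Set (Rn n) :=
  {x ∈ coneAt E y | s < infDist x E ∧ infDist x E ≤ t}


open Filter Topology

section Aux

lemma measurableSet_truncCone {E : Set (Rn n)} (hE : IsClosed E) (y : Rn n) (s t : ℝ) :
    MeasurableSet (truncCone E y s t) := by
  have hcont : Continuous fun x : Rn n => infDist x E := continuous_infDist_pt E
  have h1 : MeasurableSet (coneAt E y) := by
    exact (hE.measurableSet.compl).inter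
      (measurableSet_lt (continuous_id.dist continuous_const).measurable
        (continuous_const.mul hcont).measurable)
  exact h1.inter ((measurableSet_lt measurable_const hcont.measurable).inter
    (measurableSet_le hcont.measurable measurable_const))

lemma lintegral_set_piece_le {X : Type*} [MeasurableSpace X] {μ : Measure X} {G : X → ℝ≥0∞}
    {B : Set X} (hB : MeasurableSet B) {c : ℝ≥0∞} (hG : ∀ x ∈ B, G x ≤ c) :
    ∫⁻ x in B, G x ∂μ ≤ c * μ B := by
  calc ∫⁻ x in B, G x ∂μ = ∫⁻ x, B.indicator G x ∂μ := (lintegral_indicator hB G).symm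
    _ ≤ ∫⁻ x, B.indicator (fun _ => c) x ∂μ := by
        refine lintegral_mono fun x => ?_
        by_cases hx : x ∈ B
        · simpa [hx] using hG x hx
        · simp [hx]
    _ = c * μ B := lintegral_indicator_const hB c

lemma lintegral_set_le {X : Type*} [MeasurableSpace X] {μ : Measure X} {G : X → ℝ≥0∞}
    {A A' : Set X} (hd : MeasurableSet (A \ A')) {c : ℝ≥0∞} (hG : ∀ x ∈ A \ A', G x ≤ c) :
    ∫⁻ x in A, G x ∂μ ≤ ∫⁻ x in A', G x ∂μ + c * μ (A \ A') := by
  have hsub : A ⊆ A' ∪ (A \ A') := by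
    intro x hx
    by_cases hx' : x ∈ A'
    · exact Or.inl hx'
    · exact Or.inr ⟨hx, hx'⟩
  have hle : μ.restrict A ≤ μ.restrict A' + μ.restrict (A \ A') :=
    le_trans (Measure.restrict_mono hsub le_rfl) (Measure.restrict_union_le _ _)
  calc ∫⁻ x in A, G x ∂μ ≤ ∫⁻ x, G x ∂(μ.restrict A' + μ.restrict (A \ A')) :=
        lintegral_mono' hle le_rfl
    _ = ∫⁻ x in A', G x ∂μ + ∫⁻ x in A \ A', G x ∂μ := lintegral_add_measure _ _ _
    _ ≤ ∫⁻ x in A', G x ∂μ + c * μ (A \ A') := add_le_add_right (lintegral_set_piece_le hd hG) _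

lemma sigmaE_le_of_subset {E : Set (Rn n)} (hE : IsClosed E) {A : Set (Rn n)}
    (hA : MeasurableSet A) {s R : ℝ} (hs : 0 < s) {y : Rn n}
    (h1 : ∀ x ∈ A, s < infDist x E) (h2 : A ⊆ closedBall y R) :
    sigmaE E A ≤ ENNReal.ofReal ((s ^ n)⁻¹) * volume (closedBall y R) := by
  have hcont : Continuous fun x : Rn n => infDist x E := continuous_infDist_pt E
  calc sigmaE E A = (volume.withDensity fun x => ENNReal.ofReal ((infDist x E ^ n)⁻¹)) (A ∩ Eᶜ) :=
        Measure.restrict_apply hA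
    _ ≤ (volume.withDensity fun x => ENNReal.ofReal ((infDist x E ^ n)⁻¹)) A :=
        measure_mono inter_subset_left
    _ = ∫⁻ x in A, ENNReal.ofReal ((infDist x E ^ n)⁻¹) ∂volume := withDensity_apply _ hA
    _ ≤ ENNReal.ofReal ((s ^ n)⁻¹) * volume A := by
        refine lintegral_set_piece_le hA fun x hx => ENNReal.ofReal_le_ofReal ?_
        have hsd := h1 x hx
        have h3 : s ^ n ≤ infDist x E ^ n := pow_le_pow_left₀ hs.le hsd.le n
        exact inv_anti₀ (by positivity) h3
    _ ≤ ENNReal.ofReal ((s ^ n)⁻¹) * volume (closedBall y R) :=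
        mul_le_mul_right (measure_mono h2) _

lemma sigmaE_lt_top {E : Set (Rn n)} (hE : IsClosed E) {A : Set (Rn n)}
    (hA : MeasurableSet A) {s R : ℝ} (hs : 0 < s) {y : Rn n}
    (h1 : ∀ x ∈ A, s < infDist x E) (h2 : A ⊆ closedBall y R) :
    sigmaE E A < ⊤ :=
  lt_of_le_of_lt (sigmaE_le_of_subset hE hA hs h1 h2)
    (ENNReal.mul_lt_top ENNReal.ofReal_lt_top measure_closedBall_lt_top)

lemma rpow_neg_le_rpow_neg {a b e : ℝ} (ha : 0 < a) (hab : a ≤ b) (he : 0 ≤ e) :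
    b ^ (-e) ≤ a ^ (-e) := by
  rw [Real.rpow_neg (ha.trans_le hab).le, Real.rpow_neg ha.le]
  exact inv_anti₀ (Real.rpow_pos_of_pos ha e) (Real.rpow_le_rpow ha.le hab he)

lemma G_pointwise_le {E : Set (Rn n)} (hE : IsClosed E) {S : Rn n → Rn n → ℂ}
    {m α K₁ : ℝ} (hS : KernelSize E S m α K₁) (hm : 0 < m) (hα : 0 < α) (hK₁ : 0 < K₁)
    {μ : Measure (Rn n)} {f : Rn n → ℂ} (hf : Integrable f μ)
    {s : ℝ} (hs : 0 < s) {x : Rn n} (hxE : x ∉ E) (hsd : s < infDist x E) :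
    (‖∫ z in E, S x z * f z ∂μ‖₊ : ℝ≥0∞) ^ 2 * ENNReal.ofReal (infDist x E ^ (2*α))
      ≤ (ENNReal.ofReal (K₁ * s ^ (-m)) * ∫⁻ z, (‖f z‖₊ : ℝ≥0∞) ∂μ) ^ 2 := by
  set d := infDist x E with hd
  have hd0 : 0 < d := hs.trans hsd
  set L : ℝ≥0∞ := ∫⁻ z, (‖f z‖₊ : ℝ≥0∞) ∂μ with hL
  have hLtop : L ≠ ⊤ := hf.2.ne
  set c₁ : ℝ := K₁ * d ^ (-(m+α)) with hc₁
  have hc₁0 : 0 ≤ c₁ := by positivity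
  -- step 1 : lintegral bound
  have hlin : ∫⁻ z in E, ENNReal.ofReal ‖S x z * f z‖ ∂μ ≤ ENNReal.ofReal c₁ * L := by
    have h1 : ∫⁻ z in E, ENNReal.ofReal ‖S x z * f z‖ ∂μ
        ≤ ∫⁻ z in E, ENNReal.ofReal c₁ * (‖f z‖₊ : ℝ≥0∞) ∂μ := by
      refine lintegral_mono_ae ?_
      filter_upwards [ae_restrict_mem hE.measurableSet] with z hz
      have hSb : ‖S x z‖ ≤ c₁ := by
        refine (hS x hxE z hz).trans ?_
        have : dist x z ^ (-(m+α)) ≤ d ^ (-(m+α)) :=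
          rpow_neg_le_rpow_neg hd0 (infDist_le_dist_of_mem hz) (by positivity)
        exact mul_le_mul_of_nonneg_left this hK₁.le
      calc ENNReal.ofReal ‖S x z * f z‖ = ENNReal.ofReal (‖S x z‖ * ‖f z‖) := by
            rw [norm_mul]
        _ ≤ ENNReal.ofReal (c₁ * ‖f z‖) :=
            ENNReal.ofReal_le_ofReal (mul_le_mul_of_nonneg_right hSb (norm_nonneg _))
        _ = ENNReal.ofReal c₁ * (‖f z‖₊ : ℝ≥0∞) := by
            rw [ENNReal.ofReal_mul hc₁0, ofReal_norm]; rfl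
    refine h1.trans ?_
    rw [lintegral_const_mul' _ _ ENNReal.ofReal_ne_top]
    exact mul_le_mul_right (setLIntegral_le_lintegral _ _) _
  -- step 2 : norm bound
  have hnorm : (‖∫ z in E, S x z * f z ∂μ‖₊ : ℝ≥0∞) ≤ ENNReal.ofReal c₁ * L := by
    have hfin : ENNReal.ofReal c₁ * L ≠ ⊤ := ENNReal.mul_ne_top ENNReal.ofReal_ne_top hLtop
    have h2 : ‖∫ z in E, S x z * f z ∂μ‖ ≤ (ENNReal.ofReal c₁ * L).toReal := by
      refine (norm_integral_le_lintegral_norm _).trans ?_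
      exact ENNReal.toReal_mono hfin hlin
    calc (‖∫ z in E, S x z * f z ∂μ‖₊ : ℝ≥0∞) = ENNReal.ofReal ‖∫ z in E, S x z * f z ∂μ‖ :=
          (ofReal_norm _).symm
      _ ≤ ENNReal.ofReal ((ENNReal.ofReal c₁ * L).toReal) := ENNReal.ofReal_le_ofReal h2
      _ = ENNReal.ofReal c₁ * L := ENNReal.ofReal_toReal hfin
  -- step 3
  have hreal : c₁ ^ 2 * d ^ (2*α) ≤ (K₁ * s ^ (-m)) ^ 2 := by
    have he1 : (d ^ (-(m+α))) ^ 2 = d ^ (-(m+α) * 2) := by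
      rw [← Real.rpow_natCast (d ^ (-(m+α))) 2, ← Real.rpow_mul hd0.le]
      norm_num
    have he2 : d ^ (-(m+α) * 2) * d ^ (2*α) = d ^ (-(2*m)) := by
      rw [← Real.rpow_add hd0]; ring_nf
    have he3 : d ^ (-(2*m)) ≤ s ^ (-(2*m)) :=
      rpow_neg_le_rpow_neg hs hsd.le (by positivity)
    have he4 : (s ^ (-m)) ^ 2 = s ^ (-(2*m)) := by
      rw [← Real.rpow_natCast (s ^ (-m)) 2, ← Real.rpow_mul hs.le]
      norm_num; ring_nf
    calc c₁ ^ 2 * d ^ (2*α) = K₁ ^ 2 * ((d ^ (-(m+α))) ^ 2 * d ^ (2*α)) := by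
          rw [hc₁]; ring
      _ = K₁ ^ 2 * d ^ (-(2*m)) := by rw [he1, he2]
      _ ≤ K₁ ^ 2 * s ^ (-(2*m)) := by nlinarith [sq_nonneg K₁]
      _ = (K₁ * s ^ (-m)) ^ 2 := by rw [mul_pow, he4]
  calc (‖∫ z in E, S x z * f z ∂μ‖₊ : ℝ≥0∞) ^ 2 * ENNReal.ofReal (d ^ (2*α))
      ≤ (ENNReal.ofReal c₁ * L) ^ 2 * ENNReal.ofReal (d ^ (2*α)) := by
        exact mul_le_mul_left (pow_le_pow_left' hnorm 2) _
    _ = ENNReal.ofReal (c₁ ^ 2 * d ^ (2*α)) * L ^ 2 := by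
        have h5 : ENNReal.ofReal (c₁ ^ 2 * d ^ (2*α))
            = (ENNReal.ofReal c₁) ^ 2 * ENNReal.ofReal (d ^ (2*α)) := by
          rw [ENNReal.ofReal_mul (by positivity), ENNReal.ofReal_pow hc₁0]
        rw [h5, mul_pow]; ring
    _ ≤ ENNReal.ofReal ((K₁ * s ^ (-m)) ^ 2) * L ^ 2 :=
        mul_le_mul_left (ENNReal.ofReal_le_ofReal hreal) _
    _ = (ENNReal.ofReal (K₁ * s ^ (-m)) * L) ^ 2 := by
        rw [ENNReal.ofReal_pow (by positivity), mul_pow]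

lemma volume_bad_zero {n : ℕ} {E : Set (Rn n)} (hE : IsClosed E) {y : Rn n} (hy : y ∈ E)
    {s : ℝ} (hs : 0 < s) :
    volume {x : Rn n | s < infDist x E ∧ dist x y = 2 * infDist x E} = 0 := by
  set N : Set (Rn n) := {x | s < infDist x E ∧ dist x y = 2 * infDist x E} with hNdef
  have hcont : Continuous fun x : Rn n => infDist x E := continuous_infDist_pt E
  have hmeas : MeasurableSet N := by
    refine (measurableSet_lt measurable_const hcont.measurable).inter
      (measurableSet_eq_fun (continuous_id.dist continuous_const).measurable
        ((continuous_const.mul hcont).measurable))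
  -- no point of N is a density point
  have hkey : ∀ x ∈ N,
      ¬ Tendsto (fun r => volume (N ∩ closedBall x r) / volume (closedBall x r))
        (𝓝[>] (0:ℝ)) (𝓝 1) := by
    intro x hx hT
    obtain ⟨hsd, hxy⟩ := hx
    set d := infDist x E with hd
    have hd0 : 0 < d := hs.trans hsd
    obtain ⟨p, hpE, hpd⟩ := hE.exists_infDist_eq_dist ⟨y, hy⟩ x
    set c : ℝ≥0∞ := ENNReal.ofReal (1 - (1/16:ℝ)^n) with hc
    have hclaim : ∀ r : ℝ, 0 < r → r < d →
        volume (N ∩ closedBall x r) / volume (closedBall x r) ≤ c := by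
      intro r hr0 hrd
      set z₀ : Rn n := x + (r/(2*d)) • (p - x) with hz₀
      have hnpx : ‖p - x‖ = d := by
        rw [← dist_eq_norm, dist_comm]; exact hpd.symm
      have hz₀x : dist z₀ x = r/2 := by
        rw [dist_eq_norm, hz₀, add_sub_cancel_left, norm_smul, Real.norm_eq_abs, hnpx,
          abs_of_pos (by positivity)]
        field_simp
      have hz₀p : dist z₀ p = d - r/2 := by
        have : z₀ - p = (r/(2*d) - 1) • (p - x) := by
          rw [hz₀]; module
        rw [dist_eq_norm, this, norm_smul, Real.norm_eq_abs, hnpx,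
          abs_of_neg (by rw [sub_neg, div_lt_one (by positivity)]; linarith)]
        field_simp; ring
      have hinfz₀ : infDist z₀ E ≤ d - r/2 := hz₀p ▸ infDist_le_dist_of_mem hpE
      have hdyz₀ : 2*d - r/2 ≤ dist z₀ y := by
        have := dist_triangle x z₀ y
        rw [dist_comm x z₀] at this
        linarith [this, hz₀x, hxy]
      have hdisj : closedBall z₀ (r/16) ∩ N = ∅ := by
        ext z; simp only [mem_inter_iff, mem_closedBall, mem_empty_iff_false, iff_false,
          not_and]
        intro hzz₀ hzN
        obtain ⟨_, hzy⟩ := hzN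
        have h1 : infDist z E ≤ (d - r/2) + r/16 :=
          le_trans (infDist_le_infDist_add_dist (x:=z) (y:=z₀)) (add_le_add hinfz₀ hzz₀)
        have h2 : 2*d - r/2 - r/16 ≤ dist z y := by
          have := dist_triangle z₀ z y
          rw [dist_comm z₀ z] at this
          linarith
        linarith [hzy ▸ h2, h1]
      have hsubset : closedBall z₀ (r/16) ⊆ closedBall x r := by
        intro z hz
        simp only [mem_closedBall] at *
        calc dist z x ≤ dist z z₀ + dist z₀ x := dist_triangle _ _ _
          _ ≤ r/16 + r/2 := by linarith [hz, hz₀x.le]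
          _ ≤ r := by linarith
      have hNsub : N ∩ closedBall x r ⊆ closedBall x r \ closedBall z₀ (r/16) := by
        intro z hz
        refine ⟨hz.2, fun hzb => ?_⟩
        have : z ∈ closedBall z₀ (r/16) ∩ N := ⟨hzb, hz.1⟩
        rw [hdisj] at this; exact this
      have hV := measure_ball_pos (volume) (0:Rn n) one_pos
      set V := volume (ball (0:Rn n) 1) with hVdef
      have hVtop : V ≠ ⊤ := measure_ball_lt_top.ne
      have hballr : volume (closedBall x r) = ENNReal.ofReal (r ^ n) * V := by
        rw [Measure.addHaar_closedBall _ _ hr0.le, finrank_euclideanSpace_fin]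
      have hballz : volume (closedBall z₀ (r/16)) = ENNReal.ofReal ((r/16) ^ n) * V := by
        rw [Measure.addHaar_closedBall _ _ (by positivity), finrank_euclideanSpace_fin]
      have hdiff : volume (closedBall x r \ closedBall z₀ (r/16))
          = ENNReal.ofReal (r ^ n) * V - ENNReal.ofReal ((r/16) ^ n) * V := by
        rw [measure_diff hsubset measurableSet_closedBall.nullMeasurableSet
          (measure_closedBall_lt_top.ne), hballr, hballz]
      have hle : volume (N ∩ closedBall x r) ≤ c * volume (closedBall x r) := by
        calc volume (N ∩ closedBall x r) ≤ volume (closedBall x r \ closedBall z₀ (r/16)) :=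
              measure_mono hNsub
          _ = ENNReal.ofReal (r ^ n) * V - ENNReal.ofReal ((r/16) ^ n) * V := hdiff
          _ ≤ ENNReal.ofReal ((1 - (1/16:ℝ)^n) * r ^ n) * V := by
              rw [← ENNReal.sub_mul (fun _ _ => hVtop), ← ENNReal.ofReal_sub _ (by positivity)]
              refine mul_le_mul_left (ENNReal.ofReal_le_ofReal ?_) _
              have : (r/16)^n = (1/16:ℝ)^n * r^n := by
                rw [div_pow, div_pow]; ring
              rw [this]; ring_nf; exact le_rfl
          _ = c * volume (closedBall x r) := by
              have h116 : (0:ℝ) ≤ 1 - (1/16:ℝ)^n := by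
                have : (1/16:ℝ)^n ≤ 1 := pow_le_one₀ (by norm_num) (by norm_num)
                linarith
              rw [hballr, hc, ← mul_assoc, ← ENNReal.ofReal_mul h116]
      exact ENNReal.div_le_of_le_mul hle
    have hev : ∀ᶠ r in 𝓝[>] (0:ℝ),
        volume (N ∩ closedBall x r) / volume (closedBall x r) ≤ c := by
      filter_upwards [Ioo_mem_nhdsGT_of_mem ⟨le_refl (0:ℝ), hd0⟩] with r hr
      exact hclaim r hr.1 hr.2
    have hle1 : (1:ℝ≥0∞) ≤ c := le_of_tendsto hT hev
    have hlt : c < 1 := by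
      rw [hc]
      refine lt_of_lt_of_le (ENNReal.ofReal_lt_ofReal_iff one_pos |>.mpr ?_) (by simp)
      have : (0:ℝ) < (1/16:ℝ)^n := by positivity
      linarith
    exact absurd hle1 hlt.not_ge
  have hbes := Besicovitch.ae_tendsto_measure_inter_div (volume : Measure (Rn n)) N
  have h0 : (volume.restrict N) {x : Rn n | ¬ Tendsto
      (fun r => volume (N ∩ closedBall x r) / volume (closedBall x r)) (𝓝[>] (0:ℝ)) (𝓝 1)} = 0 :=
    ae_iff.mp hbes
  have hfin : volume N ≤ 0 :=
   calc volume N = (volume.restrict N) N := (Measure.restrict_apply_self _ _).symm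
    _ ≤ (volume.restrict N) {x : Rn n | ¬ Tendsto
      (fun r => volume (N ∩ closedBall x r) / volume (closedBall x r)) (𝓝[>] (0:ℝ)) (𝓝 1)} :=
        measure_mono (fun x hx => hkey x hx)
    _ = 0 := h0
  exact le_antisymm hfin zero_le


/-- Key quantitative comparison between square functions over two truncated cones. -/
lemma coneSF_compare {E : Set (Rn n)} (hE : IsClosed E) {S : Rn n → Rn n → ℂ}
    {m α K₁ : ℝ} (hS : KernelSize E S m α K₁) (hm : 0 < m) (hα : 0 < α) (hK₁ : 0 < K₁)
    {μ : Measure (Rn n)} {f : Rn n → ℂ} (hf : Integrable f μ)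
    {s t : ℝ} (hs : 0 < s) (y y' : Rn n) :
    coneSFOn E S α μ f (truncCone E y s t)
      ≤ coneSFOn E S α μ f (truncCone E y' s t)
        + (ENNReal.ofReal (K₁ * s ^ (-m)) * ∫⁻ z, (‖f z‖₊ : ℝ≥0∞) ∂μ)
          * (sigmaE E ((truncCone E y s t \ truncCone E y' s t) ∪
              (truncCone E y' s t \ truncCone E y s t))) ^ (1/2 : ℝ) := by
  set G : Rn n → ℝ≥0∞ := fun x =>
    (‖∫ z in E, S x z * f z ∂μ‖₊ : ℝ≥0∞) ^ 2 * ENNReal.ofReal (infDist x E ^ (2*α)) with hG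
  set c : ℝ≥0∞ := ENNReal.ofReal (K₁ * s ^ (-m)) * ∫⁻ z, (‖f z‖₊ : ℝ≥0∞) ∂μ with hc
  set A := truncCone E y s t
  set A' := truncCone E y' s t
  set Δ := (A \ A') ∪ (A' \ A) with hΔ
  have hdm : MeasurableSet (A \ A') :=
    (measurableSet_truncCone hE y s t).diff (measurableSet_truncCone hE y' s t)
  have hbd : ∀ x ∈ A \ A', G x ≤ c ^ 2 := by
    intro x hx
    exact G_pointwise_le hE hS hm hα hK₁ hf hs hx.1.1.1 hx.1.2.1
  have h1 : ∫⁻ x in A, G x ∂(sigmaE E)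
      ≤ ∫⁻ x in A', G x ∂(sigmaE E) + c ^ 2 * sigmaE E Δ := by
    refine (lintegral_set_le hdm hbd).trans ?_
    exact add_le_add_right (mul_le_mul_right (measure_mono subset_union_left) _) _
  have hc2 : (c ^ 2 * sigmaE E Δ) ^ (1/2 : ℝ) = c * (sigmaE E Δ) ^ (1/2 : ℝ) := by
    rw [ENNReal.mul_rpow_of_nonneg _ _ (by norm_num : (0:ℝ) ≤ 1/2)]
    congr 1
    rw [← ENNReal.rpow_natCast c 2, ← ENNReal.rpow_mul]
    norm_num
  calc coneSFOn E S α μ f A = (∫⁻ x in A, G x ∂(sigmaE E)) ^ (1/2 : ℝ) := rfl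
    _ ≤ (∫⁻ x in A', G x ∂(sigmaE E) + c ^ 2 * sigmaE E Δ) ^ (1/2 : ℝ) :=
        ENNReal.rpow_le_rpow h1 (by norm_num)
    _ ≤ (∫⁻ x in A', G x ∂(sigmaE E)) ^ (1/2 : ℝ) + (c ^ 2 * sigmaE E Δ) ^ (1/2 : ℝ) :=
        ENNReal.rpow_add_le_add_rpow _ _ (by norm_num) (by norm_num)
    _ = coneSFOn E S α μ f A' + c * (sigmaE E Δ) ^ (1/2 : ℝ) := by rw [hc2]; rfl

end Aux

/-- |C_{μ,s}^t f(y) − C_{μ,s}^t f(y′)| ≤ C ‖f‖_{L¹(μ)} s^{−m}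
σ(Γ_s^t(y) Δ Γ_s^t(y′))^{1/2} with C = C(K₁); consequently y ↦ C_{μ,s}^t f(y) is
continuous on E. -/
theorem statement17 (K₁ : ℝ) (hK₁ : 0 < K₁) :
    ∃ C > 0, ∀ (n : ℕ) (m α C₀ : ℝ), 0 < m → α ∈ Set.Ioc (0:ℝ) 1 →
      ∀ (E : Set (Rn n)), IsClosed E →
      ∀ (S : Rn n → Rn n → ℂ), KernelSize E S m α K₁ →
      ∀ (μ : Measure (Rn n)), OrderM E μ m C₀ →
      ∀ (s t : ℝ), 0 < s → s < t →
      ∀ (f : Rn n → ℂ), Integrable f μ →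
        (∀ y ∈ E, ∀ y' ∈ E,
          coneSFOn E S α μ f (truncCone E y s t)
            ≤ coneSFOn E S α μ f (truncCone E y' s t)
              + ENNReal.ofReal (C * s ^ (-m)) * (∫⁻ z, (‖f z‖₊ : ℝ≥0∞) ∂μ)
                * (sigmaE E ((truncCone E y s t \ truncCone E y' s t) ∪
                    (truncCone E y' s t \ truncCone E y s t))) ^ (1/2 : ℝ)) ∧
        ContinuousOn (fun y => coneSFOn E S α μ f (truncCone E y s t)) E := by
  refine ⟨K₁, hK₁, ?_⟩
  intro n m α C₀ hm hα E hE S hS μ hμ s t hs hst f hf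
  have hα0 : 0 < α := hα.1
  constructor
  · intro y _ y' _
    simpa [mul_assoc] using coneSF_compare hE hS hm hα0 hK₁ hf hs y y'
  · -- continuity
    intro y hy
    have hcont : Continuous fun x : Rn n => infDist x E := continuous_infDist_pt E
    set σm := sigmaE E with hσm
    set G : Rn n → ℝ≥0∞ := fun x =>
      (‖∫ z in E, S x z * f z ∂μ‖₊ : ℝ≥0∞) ^ 2 * ENNReal.ofReal (infDist x E ^ (2*α)) with hG
    set A : Rn n → Set (Rn n) := fun w => truncCone E w s t with hA
    set I : Rn n → ℝ≥0∞ := fun w => ∫⁻ x in A w, G x ∂σm with hI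
    set c : ℝ≥0∞ := ENNReal.ofReal (K₁ * s ^ (-m)) * ∫⁻ z, (‖f z‖₊ : ℝ≥0∞) ∂μ with hc
    have hctop : c ≠ ⊤ := ENNReal.mul_ne_top ENNReal.ofReal_ne_top hf.2.ne
    have hc2top : c ^ 2 ≠ ⊤ := pow_ne_top hctop
    have hAmeas : ∀ w, MeasurableSet (A w) := fun w => measurableSet_truncCone hE w s t
    have hGbd : ∀ w, ∀ x ∈ A w, G x ≤ c ^ 2 := fun w x hx =>
      G_pointwise_le hE hS hm hα0 hK₁ hf hs hx.1.1 hx.2.1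
    set D : Set (Rn n) := {x : Rn n | s < infDist x E ∧ infDist x E ≤ t}
        ∩ closedBall y (2*t+1) with hD
    have hDm : MeasurableSet D :=
      ((measurableSet_lt measurable_const hcont.measurable).inter
        (measurableSet_le hcont.measurable measurable_const)).inter measurableSet_closedBall
    have hsubD : ∀ w : Rn n, dist w y ≤ 1 → A w ⊆ D := by
      intro w hw x hx
      refine ⟨⟨hx.2.1, hx.2.2⟩, ?_⟩
      rw [mem_closedBall]
      calc dist x y ≤ dist x w + dist w y := dist_triangle _ _ _
        _ ≤ 2 * infDist x E + 1 := add_le_add hx.1.2.le hw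
        _ ≤ 2 * t + 1 := by linarith [hx.2.2]
    have hAyD : A y ⊆ D := hsubD y (by simp)
    have hDfin : σm D ≠ ⊤ :=
      (sigmaE_lt_top hE hDm hs (fun x hx => hx.1.1) inter_subset_right).ne
    have hIfin : ∀ w : Rn n, A w ⊆ D → I w ≠ ⊤ := by
      intro w hwD
      refine ne_top_of_le_ne_top ?_ ((lintegral_set_piece_le (hAmeas w) (hGbd w)).trans
        (mul_le_mul_right (measure_mono hwD) _))
      exact ENNReal.mul_ne_top hc2top hDfin
    -- the symmetric difference has small measure
    set Δ : Rn n → Set (Rn n) := fun w => (A w \ A y) ∪ (A y \ A w) with hΔ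
    have hΔmeas : ∀ w, MeasurableSet (Δ w) :=
      fun w => ((hAmeas w).diff (hAmeas y)).union ((hAmeas y).diff (hAmeas w))
    have hσΔ : Tendsto (fun w => σm (Δ w)) (𝓝[E] y) (𝓝 0) := by
      set F : Rn n → Rn n → ℝ≥0∞ := fun w x => (Δ w).indicator (fun _ => 1) x with hF
      have key : Tendsto (fun w => ∫⁻ x, F w x ∂σm) (𝓝[E] y) (𝓝 (∫⁻ _, (0:ℝ≥0∞) ∂σm)) := by
        refine tendsto_lintegral_filter_of_dominated_convergence
          (D.indicator (fun _ => 1))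
          (Eventually.of_forall fun w => measurable_const.indicator (hΔmeas w)) ?_ ?_ ?_
        · have h1 : ∀ᶠ w in 𝓝[E] y, dist w y ≤ 1 := by
            refine Filter.Eventually.filter_mono nhdsWithin_le_nhds ?_
            filter_upwards [Metric.closedBall_mem_nhds y one_pos] with w hw
            exact mem_closedBall.mp hw
          filter_upwards [h1] with w hw
          refine Eventually.of_forall fun x => ?_
          refine Set.indicator_le_indicator_of_subset ?_ (fun _ => zero_le) x
          exact union_subset (diff_subset.trans (hsubD w hw)) (diff_subset.trans hAyD)
        · rw [lintegral_indicator hDm, setLIntegral_one]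
          exact hDfin
        · -- a.e. convergence
          set N : Set (Rn n) := {x : Rn n | s < infDist x E ∧ dist x y = 2 * infDist x E}
          have hσN : σm N = 0 := by
            have hvol : volume N = 0 := volume_bad_zero hE hy hs
            have h2 : (volume.withDensity
                fun x : Rn n => ENNReal.ofReal ((infDist x E ^ n)⁻¹)) N = 0 :=
              (withDensity_absolutelyContinuous _ _) hvol
            exact le_antisymm (le_trans (Measure.le_iff'.mp (Measure.restrict_le_self) N) h2.le)
              zero_le
          have hae : ∀ᵐ x ∂σm, x ∉ N := by
            rw [ae_iff]
            simpa [not_not] using hσN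
          filter_upwards [hae] with x hxN
          have hmem : ∀ w : Rn n, x ∈ A w →
              (x ∉ E ∧ s < infDist x E ∧ infDist x E ≤ t) := fun w h => ⟨h.1.1, h.2.1, h.2.2⟩
          by_cases hbase : x ∉ E ∧ s < infDist x E ∧ infDist x E ≤ t
          · obtain ⟨hxE, hsd, hdt⟩ := hbase
            have hdd : Tendsto (fun w : Rn n => dist x w) (𝓝[E] y) (𝓝 (dist x y)) :=
              ((continuous_const.dist continuous_id).tendsto y).mono_left nhdsWithin_le_nhds
            rcases lt_trichotomy (dist x y) (2 * infDist x E) with hlt | heq | hgt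
            · have hev : ∀ᶠ w in 𝓝[E] y, dist x w < 2 * infDist x E :=
                hdd.eventually_lt_const hlt
              refine Tendsto.congr' ?_ tendsto_const_nhds
              filter_upwards [hev] with w hw
              have hxA : x ∈ A y := ⟨⟨hxE, hlt⟩, hsd, hdt⟩
              have hxAw : x ∈ A w := ⟨⟨hxE, hw⟩, hsd, hdt⟩
              have : x ∉ Δ w := by
                simp only [hΔ, mem_union, mem_diff, not_or, not_and, not_not]
                exact ⟨fun _ => hxA, fun _ => hxAw⟩
              simp [hF, this]
            · exact absurd ⟨hsd, heq⟩ hxN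
            · have hev : ∀ᶠ w in 𝓝[E] y, 2 * infDist x E < dist x w :=
                hdd.eventually_const_lt hgt
              refine Tendsto.congr' ?_ tendsto_const_nhds
              filter_upwards [hev] with w hw
              have hxA : x ∉ A y := fun h => absurd hgt (not_lt.mpr h.1.2.le)
              have hxAw : x ∉ A w := fun h => absurd hw (not_lt.mpr h.1.2.le)
              have : x ∉ Δ w := by
                simp only [hΔ, mem_union, mem_diff, not_or, not_and, not_not]
                exact ⟨fun h => absurd h hxAw, fun h => absurd h hxA⟩
              simp [hF, this]
          · refine Tendsto.congr' (Eventually.of_forall fun w => ?_) tendsto_const_nhds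
            have : x ∉ Δ w := by
              rintro (⟨h1, -⟩ | ⟨h1, -⟩) <;> exact hbase (hmem _ h1)
            simp [hF, this]
      rw [lintegral_zero] at key
      refine key.congr fun w => ?_
      rw [hF, lintegral_indicator_const (hΔmeas w), one_mul]
    -- squeeze
    have hup : ∀ w : Rn n, I w ≤ I y + c ^ 2 * σm (Δ w) := by
      intro w
      refine (lintegral_set_le ((hAmeas w).diff (hAmeas y))
        (fun x hx => hGbd w x hx.1)).trans ?_
      exact add_le_add_right (mul_le_mul_right (measure_mono subset_union_left) _) _
    have hlo : ∀ w : Rn n, I y - c ^ 2 * σm (Δ w) ≤ I w := by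
      intro w
      rw [tsub_le_iff_right]
      refine (lintegral_set_le ((hAmeas y).diff (hAmeas w))
        (fun x hx => hGbd y x hx.1)).trans ?_
      exact add_le_add_right (mul_le_mul_right (measure_mono subset_union_right) _) _
    have hσ' : Tendsto (fun w => c ^ 2 * σm (Δ w)) (𝓝[E] y) (𝓝 0) := by
      simpa using ENNReal.Tendsto.const_mul hσΔ (Or.inr hc2top)
    have hIy : I y ≠ ⊤ := hIfin y hAyD
    have hTup : Tendsto (fun w => I y + c ^ 2 * σm (Δ w)) (𝓝[E] y) (𝓝 (I y)) := by
      simpa using tendsto_const_nhds.add hσ'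
    have hTlo : Tendsto (fun w => I y - c ^ 2 * σm (Δ w)) (𝓝[E] y) (𝓝 (I y)) := by
      simpa using ENNReal.Tendsto.sub (tendsto_const_nhds (x := I y)) hσ' (Or.inl hIy)
    have hIT : Tendsto I (𝓝[E] y) (𝓝 (I y)) :=
      tendsto_of_tendsto_of_tendsto_of_le_of_le hTlo hTup hlo hup
    have : Tendsto (fun w => (I w) ^ (1/2 : ℝ)) (𝓝[E] y) (𝓝 ((I y) ^ (1/2 : ℝ))) :=
      (ENNReal.continuous_rpow_const.tendsto (I y)).comp hIT
    exact this
end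
end

section
/- Let B̄_1 = B̄(x_1,r_1), …, B̄_K = B̄(x_K,r_K) be finitely many closed balls in ℝⁿ with pairwise distinct centers x_i. Define A_1 := ∂(⋃_{j=1}^K B̄_j) ∩ ∂B̄_1 and, for i ∈ {2,…,K}, A_i := {x ∈ ∂(⋃_{j=1}^K B̄_j) : x ∈ ∂B̄_i \ (⋃_{j=1}^{i−1} ∂B̄_j)}. For each i set V_i := {x ∈ ℝⁿ : x = (1−λ)x_i + λa for some a ∈ A_i and λ ∈ [0,1]}. Then V_i ∩ V_j = ∅ whenever i ≠ j. -/
open MeasureTheory Metric Set ENNReal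

noncomputable section

variable {n : ℕ}

/-- The set A_i from the geometric argument: points of the boundary of the union of the
balls that lie on ∂B̄_i but on no earlier ∂B̄_j. (For i = 0 this is
∂(⋃ B̄_j) ∩ ∂B̄_0, matching the definition of A_1.) -/
def Aset {n K : ℕ} (x : Fin K → Rn n) (r : Fin K → ℝ) (i : Fin K) : Set (Rn n) :=
  frontier (⋃ j, closedBall (x j) (r j)) ∩
    (frontier (closedBall (x i) (r i)) \ ⋃ j, ⋃ (_ : j < i), frontier (closedBall (x j) (r j)))

/-- The set V_i: points on segments from the center x_i to points of A_i. -/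
def Vset {n K : ℕ} (x : Fin K → Rn n) (r : Fin K → ℝ) (i : Fin K) : Set (Rn n) :=
  {z | ∃ a ∈ Aset x r i, ∃ lam ∈ Set.Icc (0:ℝ) 1, z = (1 - lam) • x i + lam • a}


set_option maxHeartbeats 2000000 in
/-- Key geometric lemma: if a point lies on segment `[p,a]` (parameter `la`) and on
segment `[q,b]` (parameter `mu`), with `dist b q ≤ dist a q` and `dist a p ≤ dist b p`,
then `a = b` or `p = q`. -/
lemma seg_key {n : ℕ} (p q a b : Rn n) {la mu : ℝ}
    (hla0 : 0 ≤ la) (hla1 : la ≤ 1) (hmu0 : 0 ≤ mu) (hmu1 : mu ≤ 1)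
    (hbq : dist b q ≤ dist a q) (hap : dist a p ≤ dist b p)
    (heq : (1 - la) • p + la • a = (1 - mu) • q + mu • b) :
    a = b ∨ p = q := by
  obtain ⟨z, hz⟩ : ∃ z : Rn n, z = (1 - la) • p + la • a := ⟨_, rfl⟩
  have hzq' : z = (1 - mu) • q + mu • b := hz.trans heq
  have dzp : dist z p = la * dist a p := by
    have h : z - p = la • (a - p) := by rw [hz]; module
    rw [dist_eq_norm, dist_eq_norm, h, norm_smul, Real.norm_eq_abs, abs_of_nonneg hla0]
  have dza : dist a z = (1 - la) * dist a p := by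
    have h : a - z = (1 - la) • (a - p) := by rw [hz]; module
    rw [dist_eq_norm, dist_eq_norm, h, norm_smul, Real.norm_eq_abs,
      abs_of_nonneg (by linarith : (0:ℝ) ≤ 1 - la)]
  have dzq : dist z q = mu * dist b q := by
    have h : z - q = mu • (b - q) := by rw [hzq']; module
    rw [dist_eq_norm, dist_eq_norm, h, norm_smul, Real.norm_eq_abs, abs_of_nonneg hmu0]
  have dzb : dist b z = (1 - mu) * dist b q := by
    have h : b - z = (1 - mu) • (b - q) := by rw [hzq']; module
    rw [dist_eq_norm, dist_eq_norm, h, norm_smul, Real.norm_eq_abs,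
      abs_of_nonneg (by linarith : (0:ℝ) ≤ 1 - mu)]
  set ri := dist a p with hri_def
  set rj := dist b q with hrj_def
  have t1 : dist a q ≤ dist a z + dist z q := dist_triangle a z q
  have t2 : dist b p ≤ dist b z + dist z p := dist_triangle b z p
  rw [dza, dzq] at t1
  rw [dzb, dzp] at t2
  have E : (1 - la) * ri = (1 - mu) * rj := by
    have e1 : (1 - mu) * rj ≤ (1 - la) * ri := by nlinarith [hbq.trans t1]
    have e2 : (1 - la) * ri ≤ (1 - mu) * rj := by nlinarith [hap.trans t2]
    linarith
  have haq : dist a q = rj := by nlinarith [hbq.trans t1, hbq]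
  have hbp : dist b p = ri := by nlinarith [hap.trans t2, hap]
  have htri : dist a z + dist z q = dist a q := by rw [dza, dzq, haq]; nlinarith
  have hW : Wbtw ℝ a z q := dist_add_dist_eq_iff.mp htri
  by_cases hrj0 : rj = 0
  · left
    have hb : b = q := by rwa [hrj_def, dist_eq_zero] at hrj0
    have ha : a = q := by
      have : dist a q = 0 := by rw [haq, hrj0]
      rwa [dist_eq_zero] at this
    rw [ha, hb]
  · obtain ⟨t, ht, hzt⟩ := hW
    have hzlm : z = (1 - t) • a + t • q := by rw [← hzt, AffineMap.lineMap_apply_module]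
    have hdq : dist z q = (1 - t) * rj := by
      have h : z - q = (1 - t) • (a - q) := by rw [hzlm]; module
      rw [dist_eq_norm, h, norm_smul, Real.norm_eq_abs,
        abs_of_nonneg (by linarith [ht.2] : (0:ℝ) ≤ 1 - t), ← dist_eq_norm, haq]
    have htmu : t = 1 - mu := by
      have h1 : mu * rj = (1 - t) * rj := by rw [← dzq, hdq]
      have h2 := mul_right_cancel₀ hrj0 h1
      linarith
    have hmuab : mu • a = mu • b := by
      have h1 : (1 - mu) • q + mu • a = (1 - mu) • q + mu • b := by
        rw [← hzq']; rw [hzlm, htmu]; module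
      exact add_left_cancel h1
    by_cases hmu' : mu = 0
    · -- z = q; run the symmetric argument
      have hzq0 : z = q := by rw [hzq', hmu']; module
      have htri2 : dist b z + dist z p = dist b p := by rw [dzb, dzp, hbp]; nlinarith
      have hW2 : Wbtw ℝ b z p := dist_add_dist_eq_iff.mp htri2
      by_cases hri0 : ri = 0
      · right
        have ha : a = p := by rwa [hri_def, dist_eq_zero] at hri0
        have hzp0 : z = p := by rw [hz, ha]; module
        rw [← hzp0, hzq0]
      · obtain ⟨s, hs, hst⟩ := hW2
        have hzlm2 : z = (1 - s) • b + s • p := by rw [← hst, AffineMap.lineMap_apply_module]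
        have hdp : dist z p = (1 - s) * ri := by
          have h : z - p = (1 - s) • (b - p) := by rw [hzlm2]; module
          rw [dist_eq_norm, h, norm_smul, Real.norm_eq_abs,
            abs_of_nonneg (by linarith [hs.2] : (0:ℝ) ≤ 1 - s), ← dist_eq_norm, hbp]
        have hsla : s = 1 - la := by
          have h1 : la * ri = (1 - s) * ri := by rw [← dzp, hdp]
          have h2 := mul_right_cancel₀ hri0 h1
          linarith
        have hlaab : la • a = la • b := by
          have h1 : (1 - la) • p + la • a = (1 - la) • p + la • b := by
            conv_lhs => rw [← hz]
            rw [hzlm2, hsla]; module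
          exact add_left_cancel h1
        by_cases hla' : la = 0
        · right
          have hzp0 : z = p := by rw [hz, hla']; module
          rw [← hzp0, hzq0]
        · left
          exact smul_right_injective (Rn n) hla' hlaab
    · left
      exact smul_right_injective (Rn n) hmu' hmuab

/-- the sets V_i are pairwise disjoint. -/
theorem statement18 (n K : ℕ) (x : Fin K → Rn n) (r : Fin K → ℝ)
    (hx : Function.Injective x) :
    ∀ i j : Fin K, i ≠ j → Vset x r i ∩ Vset x r j = ∅ := by
  intro i j hij
  rw [Set.eq_empty_iff_forall_notMem]
  rintro z ⟨⟨a, ⟨haF, haS, haU⟩, la, ⟨hla0, hla1⟩, hza⟩,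
            ⟨b, ⟨hbF, hbS, hbU⟩, mu, ⟨hmu0, hmu1⟩, hzb⟩⟩
  have hUsub : ∀ k : Fin K, ball (x k) (r k) ⊆
      interior (⋃ m, closedBall (x m) (r m)) := fun k =>
    interior_maximal (ball_subset_closedBall.trans
      (Set.subset_iUnion (fun m => closedBall (x m) (r m)) k)) isOpen_ball
  have hbq : dist b (x j) ≤ dist a (x j) := by
    have h1 : dist b (x j) ≤ r j :=
      mem_closedBall.mp (isClosed_closedBall.frontier_subset hbS)
    have h2 : r j ≤ dist a (x j) := by
      by_contra h
      push_neg at h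
      exact haF.2 (hUsub j (mem_ball.mpr h))
    linarith
  have hap : dist a (x i) ≤ dist b (x i) := by
    have h1 : dist a (x i) ≤ r i :=
      mem_closedBall.mp (isClosed_closedBall.frontier_subset haS)
    have h2 : r i ≤ dist b (x i) := by
      by_contra h
      push_neg at h
      exact hbF.2 (hUsub i (mem_ball.mpr h))
    linarith
  have heq : (1 - la) • (x i) + la • a = (1 - mu) • (x j) + mu • b := by
    rw [← hza, ← hzb]
  rcases seg_key (x i) (x j) a b hla0 hla1 hmu0 hmu1 hbq hap heq with hab | hpq
  · rcases lt_or_gt_of_ne hij with hlt | hgt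
    · exact hbU (Set.mem_iUnion.mpr ⟨i, Set.mem_iUnion.mpr ⟨hlt, hab ▸ haS⟩⟩)
    · exact haU (Set.mem_iUnion.mpr ⟨j, Set.mem_iUnion.mpr ⟨hgt, hab ▸ hbS⟩⟩)
  · exact hij (hx hpq)
end
end
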